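/- arXiv:0806.4318 — 6 statements merged into one kernel-verified Lean document; each statement's English description precedes it below -/
import Mathlib

section
/- The number of standard Young tableaux of shape (n₁, ..., n_d) with n₁ ≥ n₂ ≥ ... ≥ n_d ≥ 0 equals ∏_{1≤i<j≤d} (n_i - n_j + j - i) · (n₁ + ... + n_d)! / ((n₁+d-1)!(n₂+d-2)!···n_d!). -/
open Finset

/-- Number of lattice walks in `ℤ^d` from the origin to `n` using unit positive coordinate
steps, staying at all times in the region `x₁ ≥ x₂ ≥ ... ≥ x_d ≥ 0`.  A walk is recorded
as the sequence of coordinate indices of its steps; this is the number of standard Young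
tableaux of shape `(n₁, ..., n_d)`. -/
noncomputable def ballotWalks (d : ℕ) (n : Fin d → ℕ) : ℕ :=
  Nat.card {g : Fin (∑ i, n i) → Fin d //
    (∀ (k : ℕ) (i j : Fin d), i ≤ j →
      (Finset.univ.filter (fun t : Fin (∑ i, n i) => (t : ℕ) < k ∧ g t = j)).card ≤
      (Finset.univ.filter (fun t : Fin (∑ i, n i) => (t : ℕ) < k ∧ g t = i)).card) ∧
    (∀ j : Fin d, (Finset.univ.filter (fun t : Fin (∑ i, n i) => g t = j)).card = n j)}

namespace YFM

open Polynomial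

/-! ### Generalities -/

lemma natCard_sigma {ι : Type*} [Fintype ι] (T : ι → Type*) [∀ i, Finite (T i)] :
    Nat.card (Σ i, T i) = ∑ i, Nat.card (T i) := by
  classical
  letI : ∀ i, Fintype (T i) := fun i => Fintype.ofFinite (T i)
  simp [Nat.card_eq_fintype_card, Fintype.card_sigma]

/-! ### Walks -/

def IsWalk (d m : ℕ) (n : Fin d → ℕ) (g : Fin m → Fin d) : Prop :=
  (∀ (k : ℕ) (i j : Fin d), i ≤ j →
      (Finset.univ.filter (fun t : Fin m => (t : ℕ) < k ∧ g t = j)).card ≤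
      (Finset.univ.filter (fun t : Fin m => (t : ℕ) < k ∧ g t = i)).card) ∧
  (∀ j : Fin d, (Finset.univ.filter (fun t : Fin m => g t = j)).card = n j)

lemma ballot_eq (d : ℕ) (n : Fin d → ℕ) (m : ℕ) (h : (∑ i, n i) = m) :
    ballotWalks d n = Nat.card {g : Fin m → Fin d // IsWalk d m n g} := by
  subst h; rfl

variable {d m : ℕ}

lemma card_filter_castSucc (q : Fin (m + 1) → Prop) [DecidablePred q] :
    (Finset.univ.filter q).card =
      (Finset.univ.filter (fun t : Fin m => q t.castSucc)).card
        + (if q (Fin.last m) then 1 else 0) := by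
  rw [Finset.card_filter, Finset.card_filter, Fin.sum_univ_castSucc]

lemma count_restrict (g : Fin (m + 1) → Fin d) (i : Fin d) {k : ℕ} (hk : k ≤ m) :
    (Finset.univ.filter (fun t : Fin (m + 1) => (t : ℕ) < k ∧ g t = i)).card =
      (Finset.univ.filter (fun t : Fin m => (t : ℕ) < k ∧ g t.castSucc = i)).card := by
  rw [card_filter_castSucc (fun t => (t : ℕ) < k ∧ g t = i)]
  have h1 : ¬(((Fin.last m : Fin (m+1)) : ℕ) < k ∧ g (Fin.last m) = i) := by
    rw [Fin.val_last]; exact fun h => absurd h.1 (by omega)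
  rw [if_neg h1, add_zero]
  simp only [Fin.coe_castSucc]

lemma count_all {k : ℕ} (h : m ≤ k) (g : Fin m → Fin d) (i : Fin d) :
    (Finset.univ.filter (fun t : Fin m => (t : ℕ) < k ∧ g t = i)).card =
      (Finset.univ.filter (fun t : Fin m => g t = i)).card := by
  congr 1
  apply Finset.filter_congr
  intro t _
  exact and_iff_right (lt_of_lt_of_le t.isLt h)

lemma sum_count (g : Fin m → Fin d) :
    ∑ j, (Finset.univ.filter (fun t : Fin m => g t = j)).card = m := by
  classical
  have h := Finset.card_eq_sum_card_fiberwise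
    (f := g) (s := Finset.univ) (t := Finset.univ) (fun x _ => mem_univ (g x))
  simpa using h.symm

lemma isWalk_sum {n : Fin d → ℕ} {g : Fin m → Fin d} (h : IsWalk d m n g) : ∑ i, n i = m := by
  rw [← sum_count g]
  exact Finset.sum_congr rfl fun j _ => (h.2 j).symm

lemma isEmpty_of_bad {n : Fin d → ℕ} {i j : Fin d} (hij : i ≤ j) (hlt : n i < n j) :
    IsEmpty {g : Fin m → Fin d // IsWalk d m n g} := by
  constructor
  rintro ⟨g, hb, hc⟩
  have h := hb m i j hij
  rw [count_all le_rfl g i, count_all le_rfl g j, hc i, hc j] at h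
  omega

lemma isEmpty_of_sum {n : Fin d → ℕ} (h : (∑ i, n i) ≠ m) :
    IsEmpty {g : Fin m → Fin d // IsWalk d m n g} :=
  ⟨fun x => h (isWalk_sum x.2)⟩

lemma fiber_card (n : Fin d → ℕ) (hmono : ∀ i j : Fin d, i ≤ j → n j ≤ n i)
    (hsum : ∑ i, n i = m + 1) (j : Fin d) :
    Nat.card {g : Fin (m + 1) → Fin d // IsWalk d (m + 1) n g ∧ g (Fin.last m) = j} =
      Nat.card {g : Fin m → Fin d // IsWalk d m (Function.update n j (n j - 1)) g} := by
  classical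
  rcases Nat.eq_zero_or_pos (n j) with hj0 | hjpos
  · have e1 : IsEmpty {g : Fin (m + 1) → Fin d // IsWalk d (m + 1) n g ∧ g (Fin.last m) = j} := by
      constructor
      rintro ⟨g, ⟨hb, hc⟩, hl⟩
      have h := hc j
      rw [card_filter_castSucc (fun t => g t = j), if_pos hl] at h
      omega
    have hupd : Function.update n j (n j - 1) = n := Function.update_eq_self_iff.mpr (by omega)
    rw [hupd]
    haveI e2 : IsEmpty {g : Fin m → Fin d // IsWalk d m n g} := isEmpty_of_sum (by omega)
    rw [Nat.card_of_isEmpty, Nat.card_of_isEmpty]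
  · set n' := Function.update n j (n j - 1) with hn'
    have forward : ∀ g : Fin (m + 1) → Fin d, IsWalk d (m + 1) n g → g (Fin.last m) = j →
        IsWalk d m n' (fun t => g t.castSucc) := by
      intro g hg hl
      obtain ⟨hb, hc⟩ := hg
      have hcount : ∀ i, (Finset.univ.filter (fun t : Fin m => g t.castSucc = i)).card = n' i := by
        intro i
        have h := hc i
        rw [card_filter_castSucc (fun t => g t = i)] at h
        by_cases hi : i = j
        · subst hi
          rw [if_pos hl] at h
          rw [hn', Function.update_self]
          omega
        · have : ¬ (g (Fin.last m) = i) := by rw [hl]; exact fun hh => hi hh.symm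
          rw [if_neg this, add_zero] at h
          rw [hn', Function.update_of_ne hi, h]
      refine ⟨?_, hcount⟩
      intro k i i' hii'
      rcases le_or_gt k m with hk | hk
      · rw [← count_restrict g i hk, ← count_restrict g i' hk]
        exact hb k i i' hii'
      · rw [count_all (by omega) _ i, count_all (by omega) _ i', hcount i, hcount i']
        have key := hb m i i' hii'
        rw [count_restrict g i le_rfl, count_restrict g i' le_rfl,
          count_all le_rfl _ i, count_all le_rfl _ i', hcount i, hcount i'] at key
        exact key
    have backward : ∀ g' : Fin m → Fin d, IsWalk d m n' g' →
        IsWalk d (m + 1) n (Fin.snoc g' j) := by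
      intro g' hg'
      obtain ⟨hb', hc'⟩ := hg'
      set G : Fin (m + 1) → Fin d := Fin.snoc g' j with hG
      have hGc : ∀ t : Fin m, G t.castSucc = g' t := fun t => by
        rw [hG]; simp
      have hGl : G (Fin.last m) = j := by rw [hG]; simp
      have hcount : ∀ i, (Finset.univ.filter
          (fun t : Fin (m + 1) => G t = i)).card = n i := by
        intro i
        rw [card_filter_castSucc (fun t => G t = i)]
        simp only [hGc, hGl]
        rw [hc' i]
        by_cases hi : j = i
        · subst hi
          rw [if_pos rfl, hn', Function.update_self]
          omega
        · rw [if_neg hi, add_zero, hn', Function.update_of_ne (fun hh => hi hh.symm)]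
      refine ⟨?_, hcount⟩
      intro k i i' hii'
      rcases le_or_gt k m with hk | hk
      · rw [count_restrict G i hk, count_restrict G i' hk]
        simp only [hGc]
        exact hb' k i i' hii'
      · rw [count_all (by omega) G i, count_all (by omega) G i', hcount i, hcount i']
        exact hmono i i' hii'
    apply Nat.card_congr
    refine
      { toFun := fun x => ⟨fun t => x.1 t.castSucc, forward x.1 x.2.1 x.2.2⟩
        invFun := fun y => ⟨Fin.snoc y.1 j, backward y.1 y.2, by simp⟩
        left_inv := ?_
        right_inv := ?_ }
    · rintro ⟨g, hg, hl⟩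
      apply Subtype.ext
      funext t
      induction t using Fin.lastCases with
      | last => simpa using hl.symm
      | cast s => simp
    · rintro ⟨g', hg'⟩
      apply Subtype.ext
      funext t
      simp

lemma walk_rec (n : Fin d → ℕ) (hmono : ∀ i j : Fin d, i ≤ j → n j ≤ n i)
    (hsum : ∑ i, n i = m + 1) :
    Nat.card {g : Fin (m + 1) → Fin d // IsWalk d (m + 1) n g} =
      ∑ j : Fin d, Nat.card {g : Fin m → Fin d // IsWalk d m (Function.update n j (n j - 1)) g} := by
  classical
  have e : {g : Fin (m + 1) → Fin d // IsWalk d (m + 1) n g} ≃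
      Σ j : Fin d, {g : Fin (m + 1) → Fin d // IsWalk d (m + 1) n g ∧ g (Fin.last m) = j} :=
    { toFun := fun x => ⟨x.1 (Fin.last m), x.1, x.2, rfl⟩
      invFun := fun y => ⟨y.2.1, y.2.2.1⟩
      left_inv := fun x => rfl
      right_inv := by rintro ⟨jj, g, hg, rfl⟩; rfl }
  rw [Nat.card_congr e, natCard_sigma]
  exact Finset.sum_congr rfl fun j _ => fiber_card n hmono hsum j

/-! ### The Vandermonde-type product -/

def pairs (d : ℕ) : Finset (Fin d × Fin d) := Finset.univ.filter fun p => p.1 < p.2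

noncomputable def vand {d : ℕ} (v : Fin d → ℚ) : ℚ := ∏ p ∈ pairs d, (v p.1 - v p.2)

lemma vand_split (v : Fin d → ℚ) (j : Fin d) :
    vand v = (∏ p ∈ (pairs d).filter (fun p => p.1 ≠ j ∧ p.2 ≠ j), (v p.1 - v p.2)) *
      ((∏ i ∈ Finset.univ.filter (fun i : Fin d => i < j), (v i - v j)) *
       (∏ i ∈ Finset.univ.filter (fun i : Fin d => j < i), (v j - v i))) := by
  classical
  rw [vand, ← Finset.prod_filter_mul_prod_filter_not (pairs d) (fun p => p.1 ≠ j ∧ p.2 ≠ j)]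
  congr 1
  rw [← Finset.prod_filter_mul_prod_filter_not
    ((pairs d).filter (fun p => ¬(p.1 ≠ j ∧ p.2 ≠ j))) (fun p => p.2 = j)]
  congr 1
  · refine Finset.prod_nbij' (fun p => p.1) (fun i => (i, j)) ?_ ?_ ?_ ?_ ?_
    · intro p hp
      simp only [pairs, Finset.mem_filter, Finset.mem_univ, true_and, not_and, not_not] at hp
      obtain ⟨⟨hlt, _⟩, h2⟩ := hp
      simp only [Finset.mem_filter, Finset.mem_univ, true_and]
      rw [← h2]; exact hlt
    · intro i hi
      simp only [Finset.mem_filter, Finset.mem_univ, true_and] at hi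
      exact Finset.mem_filter.mpr ⟨Finset.mem_filter.mpr ⟨Finset.mem_filter.mpr
        ⟨Finset.mem_univ _, hi⟩, fun hc => absurd rfl hc.2⟩, rfl⟩
    · intro p hp
      simp only [pairs, Finset.mem_filter, Finset.mem_univ, true_and, not_and, not_not] at hp
      rw [Prod.ext_iff]
      exact ⟨rfl, hp.2.symm⟩
    · intro i hi; rfl
    · intro p hp
      simp only [pairs, Finset.mem_filter, Finset.mem_univ, true_and, not_and, not_not] at hp
      rw [hp.2]
  · refine Finset.prod_nbij' (fun p => p.2) (fun i => (j, i)) ?_ ?_ ?_ ?_ ?_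
    · intro p hp
      simp only [pairs, Finset.mem_filter, Finset.mem_univ, true_and, not_and, not_not] at hp
      obtain ⟨⟨hlt, hor⟩, h2⟩ := hp
      have h1 : p.1 = j := by
        rcases Classical.em (p.1 = j) with h | h
        · exact h
        · exact absurd (hor h) h2
      simp only [Finset.mem_filter, Finset.mem_univ, true_and]
      rw [← h1]; exact hlt
    · intro i hi
      simp only [Finset.mem_filter, Finset.mem_univ, true_and] at hi
      exact Finset.mem_filter.mpr ⟨Finset.mem_filter.mpr ⟨Finset.mem_filter.mpr
        ⟨Finset.mem_univ _, hi⟩, fun hc => absurd rfl hc.1⟩, fun h => absurd h (ne_of_gt hi)⟩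
    · intro p hp
      simp only [pairs, Finset.mem_filter, Finset.mem_univ, true_and, not_and, not_not] at hp
      have h1 : p.1 = j := by
        rcases Classical.em (p.1 = j) with h | h
        · exact h
        · exact absurd (hp.1.2 h) hp.2
      rw [Prod.ext_iff]
      exact ⟨h1.symm, rfl⟩
    · intro i hi; rfl
    · intro p hp
      simp only [pairs, Finset.mem_filter, Finset.mem_univ, true_and, not_and, not_not] at hp
      have h1 : p.1 = j := by
        rcases Classical.em (p.1 = j) with h | h
        · exact h
        · exact absurd (hp.1.2 h) hp.2
      rw [h1]

lemma erase_split (w : Fin d → ℚ) (j : Fin d) :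
    ∏ i ∈ Finset.univ.erase j, w i =
      (∏ i ∈ Finset.univ.filter (fun i : Fin d => i < j), w i) *
      (∏ i ∈ Finset.univ.filter (fun i : Fin d => j < i), w i) := by
  classical
  rw [← Finset.prod_filter_mul_prod_filter_not (Finset.univ.erase j) (fun i => i < j)]
  congr 1
  · congr 1
    ext i
    simp only [Finset.mem_filter, Finset.mem_erase, Finset.mem_univ, true_and, and_true]
    exact ⟨fun h => h.2, fun h => ⟨ne_of_lt h, h⟩⟩
  · congr 1
    ext i
    simp only [Finset.mem_filter, Finset.mem_erase, Finset.mem_univ, true_and, and_true]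
    constructor
    · rintro ⟨hne, hnlt⟩
      exact lt_of_le_of_ne (not_lt.mp hnlt) (Ne.symm hne)
    · intro h
      exact ⟨ne_of_gt h, not_lt.mpr (le_of_lt h)⟩

lemma vand_update_mul (v : Fin d → ℚ) (j : Fin d) (x : ℚ) :
    vand (Function.update v j x) * ∏ i ∈ Finset.univ.erase j, (v j - v i)
      = vand v * ∏ i ∈ Finset.univ.erase j, (x - v i) := by
  classical
  rw [vand_split (Function.update v j x) j, vand_split v j,
    erase_split (fun i => v j - v i) j, erase_split (fun i => x - v i) j]
  have h0 : ∏ p ∈ (pairs d).filter (fun p => p.1 ≠ j ∧ p.2 ≠ j),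
      (Function.update v j x p.1 - Function.update v j x p.2)
      = ∏ p ∈ (pairs d).filter (fun p => p.1 ≠ j ∧ p.2 ≠ j), (v p.1 - v p.2) := by
    refine Finset.prod_congr rfl fun p hp => ?_
    have h := (Finset.mem_filter.mp hp).2
    rw [Function.update_of_ne h.1, Function.update_of_ne h.2]
  have h1 : ∏ i ∈ Finset.univ.filter (fun i : Fin d => i < j),
      (Function.update v j x i - Function.update v j x j)
      = ∏ i ∈ Finset.univ.filter (fun i : Fin d => i < j), (v i - x) := by
    refine Finset.prod_congr rfl fun i hi => ?_
    have h := (Finset.mem_filter.mp hi).2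
    rw [Function.update_of_ne (ne_of_lt h), Function.update_self]
  have h2 : ∏ i ∈ Finset.univ.filter (fun i : Fin d => j < i),
      (Function.update v j x j - Function.update v j x i)
      = ∏ i ∈ Finset.univ.filter (fun i : Fin d => j < i), (x - v i) := by
    refine Finset.prod_congr rfl fun i hi => ?_
    have h := (Finset.mem_filter.mp hi).2
    rw [Function.update_of_ne (ne_of_gt h), Function.update_self]
  rw [h0, h1, h2]
  have key : (∏ i ∈ Finset.univ.filter (fun i : Fin d => i < j), (v i - x)) *
      (∏ i ∈ Finset.univ.filter (fun i : Fin d => i < j), (v j - v i))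
      = (∏ i ∈ Finset.univ.filter (fun i : Fin d => i < j), (v i - v j)) *
        (∏ i ∈ Finset.univ.filter (fun i : Fin d => i < j), (x - v i)) := by
    rw [← Finset.prod_mul_distrib, ← Finset.prod_mul_distrib]
    exact Finset.prod_congr rfl fun i _ => by ring
  set A := ∏ p ∈ (pairs d).filter (fun p => p.1 ≠ j ∧ p.2 ≠ j), (v p.1 - v p.2)
  set B1 := ∏ i ∈ Finset.univ.filter (fun i : Fin d => i < j), (v i - x)
  set B2 := ∏ i ∈ Finset.univ.filter (fun i : Fin d => j < i), (x - v i)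
  set C1 := ∏ i ∈ Finset.univ.filter (fun i : Fin d => i < j), (v j - v i)
  set C2 := ∏ i ∈ Finset.univ.filter (fun i : Fin d => j < i), (v j - v i)
  set D1 := ∏ i ∈ Finset.univ.filter (fun i : Fin d => i < j), (v i - v j)
  set E1 := ∏ i ∈ Finset.univ.filter (fun i : Fin d => i < j), (x - v i)
  linear_combination A * B2 * C2 * key

/-! ### Coefficients of products of linear factors -/

lemma Q_monic {ι : Type*} (s : Finset ι) (a : ι → ℚ) : (∏ i ∈ s, (X - C (a i))).Monic :=
  monic_prod_of_monic _ _ fun i _ => monic_X_sub_C (a i)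

lemma Q_natDegree {ι : Type*} (s : Finset ι) (a : ι → ℚ) :
    (∏ i ∈ s, (X - C (a i))).natDegree = s.card := by
  rw [Polynomial.natDegree_prod _ _ (fun i _ => X_sub_C_ne_zero (a i))]
  simp [natDegree_X_sub_C]

lemma Q_coeff_card {ι : Type*} (s : Finset ι) (a : ι → ℚ) :
    (∏ i ∈ s, (X - C (a i))).coeff s.card = 1 := by
  have h := (Q_monic s a).coeff_natDegree
  rwa [Q_natDegree s a] at h

lemma Q_coeff_gt {ι : Type*} (s : Finset ι) (a : ι → ℚ) {k : ℕ} (hk : s.card < k) :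
    (∏ i ∈ s, (X - C (a i))).coeff k = 0 :=
  coeff_eq_zero_of_natDegree_lt (by rw [Q_natDegree]; exact hk)

lemma Q_coeff_one {ι : Type*} (s : Finset ι) (a : ι → ℚ) (hs : s.Nonempty) :
    (∏ i ∈ s, (X - C (a i))).coeff (s.card - 1) = -∑ i ∈ s, a i := by
  classical
  have h := Polynomial.Monic.nextCoeff_prod s (fun i => X - C (a i))
    (fun i _ => monic_X_sub_C (a i))
  have h2 := Polynomial.nextCoeff_of_natDegree_pos
    (p := ∏ i ∈ s, (X - C (a i))) (by rw [Q_natDegree]; exact hs.card_pos)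
  rw [Q_natDegree] at h2
  rw [← h2, h]
  simp [nextCoeff_X_sub_C]

lemma Q_coeff_two {ι : Type*} (s : Finset ι) (a : ι → ℚ) :
    2 ≤ s.card →
    (∏ i ∈ s, (X - C (a i))).coeff (s.card - 2)
      = ((∑ i ∈ s, a i) ^ 2 - ∑ i ∈ s, (a i) ^ 2) / 2 := by
  classical
  induction s using Finset.cons_induction with
  | empty => intro h; simp at h
  | cons x t hx ih =>
    intro hs
    rw [Finset.prod_cons, Finset.sum_cons, Finset.sum_cons, Finset.card_cons]
    rcases lt_or_ge t.card 2 with h2 | h2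
    · have h1 : t.card = 1 := by
        have := Finset.card_cons (s := t) hx
        omega
      obtain ⟨y, rfl⟩ := Finset.card_eq_one.mp h1
      rw [h1]
      norm_num [Finset.prod_singleton, Finset.sum_singleton, Polynomial.mul_coeff_zero]
      ring
    · have hne : t.Nonempty := Finset.card_pos.mp (by omega)
      have e1 := Q_coeff_one t a hne
      have e2 := ih h2
      have hidx : t.card + 1 - 2 = (t.card - 2) + 1 := by omega
      have hidx2 : t.card - 2 + 1 = t.card - 1 := by omega
      rw [hidx, sub_mul, coeff_sub, coeff_X_mul, coeff_C_mul, hidx2, e1, e2]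
      ring

/-! ### Lagrange coefficient extraction -/

lemma lagrange_coeff {d : ℕ} (v : Fin d → ℚ) (hinj : Function.Injective v) (r : ℚ[X])
    (hr : r.degree < (d : ℕ)) :
    r.coeff (d - 1) = ∑ j, r.eval (v j) * ∏ i ∈ Finset.univ.erase j, (v j - v i)⁻¹ := by
  classical
  rcases Nat.eq_zero_or_pos d with rfl | hd
  · rw [Polynomial.degree_lt_iff_coeff_zero] at hr
    rw [hr 0 (by simp)]
    simp
  · have hcard : (Finset.univ : Finset (Fin d)).card = d := by simp
    have h := Lagrange.eq_interpolate (s := Finset.univ) (v := v) hinj.injOn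
      (by rw [hcard]; exact hr)
    conv_lhs => rw [h]
    rw [Lagrange.interpolate_apply, Polynomial.finset_sum_coeff]
    refine Finset.sum_congr rfl fun j _ => ?_
    rw [Polynomial.coeff_C_mul]
    congr 1
    have hnd : (Lagrange.basis Finset.univ v j).natDegree = d - 1 := by
      rw [Lagrange.natDegree_basis hinj.injOn (mem_univ j), hcard]
    rw [← hnd, Polynomial.coeff_natDegree, Lagrange.basis, Polynomial.leadingCoeff_prod]
    refine Finset.prod_congr rfl fun i hi => ?_
    rw [Lagrange.basisDivisor, Polynomial.leadingCoeff_mul, Polynomial.leadingCoeff_C,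
      (monic_X_sub_C (v i)).leadingCoeff, mul_one]

/-! ### The key algebraic identity -/

lemma star {d : ℕ} (v : Fin d → ℚ) (hinj : Function.Injective v) :
    ∑ j, v j * vand (Function.update v j (v j - 1)) =
      (∑ i, v i - (d : ℚ) * ((d : ℚ) - 1) / 2) * vand v := by
  classical
  rcases le_or_gt d 1 with hd | hd
  · interval_cases d
    · simp [vand, pairs]
    · have hpair : pairs 1 = ∅ := by decide
      simp only [vand, hpair, Finset.prod_empty, mul_one, Fin.sum_univ_one]
      norm_num
  · have hne : (Finset.univ : Finset (Fin d)).Nonempty := ⟨⟨0, by omega⟩, mem_univ _⟩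
    have hcard : (Finset.univ : Finset (Fin d)).card = d := by simp
    set P : ℚ[X] := ∏ i : Fin d, (X - C (v i)) with hP
    set Ps : ℚ[X] := ∏ i : Fin d, (X - C (v i + 1)) with hPs
    set S : ℚ := ∑ i, v i with hS
    have hsum1 : ∑ i : Fin d, (v i + 1) = S + d := by
      rw [Finset.sum_add_distrib]
      simp [hS, hcard]
    have hsumsq : ∑ i : Fin d, (v i + 1) ^ 2 = (∑ i, (v i) ^ 2) + 2 * S + d := by
      calc ∑ i : Fin d, (v i + 1) ^ 2 = ∑ i : Fin d, ((v i) ^ 2 + (2 * v i + 1)) :=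
            Finset.sum_congr rfl fun i _ => by ring
        _ = _ := by
            rw [Finset.sum_add_distrib, Finset.sum_add_distrib, ← Finset.mul_sum]
            simp [hS, hcard]
            ring
    have hc1P : P.coeff (d - 1) = -S := by
      have := Q_coeff_one Finset.univ v hne
      rwa [hcard] at this
    have hc1Ps : Ps.coeff (d - 1) = -(S + d) := by
      have := Q_coeff_one Finset.univ (fun i => v i + 1) hne
      rwa [hcard, hsum1] at this
    have hc2P : P.coeff (d - 2) = (S ^ 2 - ∑ i, (v i) ^ 2) / 2 := by
      have := Q_coeff_two Finset.univ v (by rw [hcard]; omega)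
      rwa [hcard] at this
    have hc2Ps : Ps.coeff (d - 2) = ((S + d) ^ 2 - ((∑ i, (v i) ^ 2) + 2 * S + d)) / 2 := by
      have := Q_coeff_two Finset.univ (fun i => v i + 1) (by rw [hcard]; omega)
      rwa [hcard, hsum1, hsumsq] at this
    have hcP : P.coeff d = 1 := by
      have := Q_coeff_card Finset.univ v
      rwa [hcard] at this
    have hcPs : Ps.coeff d = 1 := by
      have := Q_coeff_card Finset.univ (fun i => v i + 1)
      rwa [hcard] at this
    have hgtP : ∀ k, d < k → P.coeff k = 0 := fun k hk => Q_coeff_gt _ _ (by rw [hcard]; exact hk)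
    have hgtPs : ∀ k, d < k → Ps.coeff k = 0 := fun k hk => Q_coeff_gt _ _ (by rw [hcard]; exact hk)
    set r : ℚ[X] := X * Ps - (X - C (d : ℚ)) * P with hr
    have hrdeg : r.degree < (d : ℕ) := by
      rw [Polynomial.degree_lt_iff_coeff_zero]
      intro k hk
      have hk' : d ≤ k := by exact_mod_cast hk
      obtain ⟨k, rfl⟩ : ∃ k', k = k' + 1 := ⟨k - 1, by omega⟩
      rw [hr, coeff_sub, coeff_X_mul, sub_mul, coeff_sub, coeff_X_mul, coeff_C_mul]
      rcases eq_or_lt_of_le hk' with heq | hlt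
      · have hkd : k = d - 1 := by omega
        rw [hkd]
        have hd1 : d - 1 + 1 = d := by omega
        rw [hd1, hc1Ps, hc1P, hcP]
        ring
      · have hkd : d ≤ k := by omega
        rcases eq_or_lt_of_le hkd with heq2 | hlt2
        · rw [← heq2, hcPs, hcP, hgtP (d + 1) (by omega)]
          ring
        · rw [hgtPs k (by omega), hgtP k (by omega), hgtP (k + 1) (by omega)]
          ring
    have hcoeff : r.coeff (d - 1) = (d : ℚ) * ((d : ℚ) - 1) / 2 - S := by
      have hd2 : d - 1 = (d - 2) + 1 := by omega
      have hd2' : d - 2 + 1 = d - 1 := by omega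
      rw [hr, coeff_sub, hd2, coeff_X_mul, sub_mul, coeff_sub, coeff_X_mul, coeff_C_mul,
        hd2', hc2Ps, hc2P, hc1P]
      ring
    have heval : ∀ j, r.eval (v j) = -(v j * ∏ i ∈ Finset.univ.erase j, (v j - 1 - v i)) := by
      intro j
      have hPj : P.eval (v j) = 0 := by
        rw [hP, eval_prod]
        exact Finset.prod_eq_zero (mem_univ j) (by simp)
      have hPsj : Ps.eval (v j) = -(∏ i ∈ Finset.univ.erase j, (v j - 1 - v i)) := by
        rw [hPs, eval_prod, ← Finset.prod_erase_mul Finset.univ _ (mem_univ j)]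
        have h1 : eval (v j) (X - C (v j + 1)) = -1 := by simp
        rw [h1]
        have h2 : ∏ i ∈ Finset.univ.erase j, eval (v j) (X - C (v i + 1))
            = ∏ i ∈ Finset.univ.erase j, (v j - 1 - v i) := by
          refine Finset.prod_congr rfl fun i _ => ?_
          simp only [eval_sub, eval_X, eval_C]
          ring
        rw [h2]
        ring
      rw [hr]
      simp only [eval_sub, eval_mul, eval_X, eval_C, hPj, hPsj]
      ring
    have key : ∀ j, v j * vand (Function.update v j (v j - 1)) =
        vand v * (-(r.eval (v j)) * ∏ i ∈ Finset.univ.erase j, (v j - v i)⁻¹) := by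
      intro j
      have hnz : ∏ i ∈ Finset.univ.erase j, (v j - v i) ≠ 0 := by
        rw [Finset.prod_ne_zero_iff]
        intro i hi
        exact sub_ne_zero.mpr fun hh => (Finset.mem_erase.mp hi).1 (hinj hh).symm
      have hmul : v j * vand (Function.update v j (v j - 1)) *
          (∏ i ∈ Finset.univ.erase j, (v j - v i))
          = vand v * (-(r.eval (v j))) := by
        rw [heval j, neg_neg]
        have hu := vand_update_mul v j (v j - 1)
        calc v j * vand (Function.update v j (v j - 1)) *
              (∏ i ∈ Finset.univ.erase j, (v j - v i))
            = v j * (vand (Function.update v j (v j - 1)) *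
              (∏ i ∈ Finset.univ.erase j, (v j - v i))) := by ring
          _ = v j * (vand v * ∏ i ∈ Finset.univ.erase j, (v j - 1 - v i)) := by rw [hu]
          _ = vand v * (v j * ∏ i ∈ Finset.univ.erase j, (v j - 1 - v i)) := by ring
      rw [Finset.prod_inv_distrib]
      refine mul_right_cancel₀ hnz ?_
      rw [hmul]
      field_simp
    calc ∑ j, v j * vand (Function.update v j (v j - 1))
        = ∑ j, vand v * (-(r.eval (v j)) * ∏ i ∈ Finset.univ.erase j, (v j - v i)⁻¹) :=
          Finset.sum_congr rfl fun j _ => key j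
      _ = vand v * -(∑ j, r.eval (v j) * ∏ i ∈ Finset.univ.erase j, (v j - v i)⁻¹) := by
          rw [← Finset.mul_sum, ← Finset.sum_neg_distrib]
          congr 1
          exact Finset.sum_congr rfl fun j _ => by ring
      _ = vand v * -(r.coeff (d - 1)) := by rw [← lagrange_coeff v hinj r hrdeg]
      _ = (S - (d : ℚ) * ((d : ℚ) - 1) / 2) * vand v := by rw [hcoeff]; ring

/-! ### Numeric helper lemmas -/

lemma gauss_q (d : ℕ) :
    ((∑ i : Fin d, (d - 1 - (i : ℕ)) : ℕ) : ℚ) = (d : ℚ) * ((d : ℚ) - 1) / 2 := by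
  rcases Nat.eq_zero_or_pos d with rfl | hd
  · simp
  · have h1 : ∑ i : Fin d, (d - 1 - (i : ℕ)) = ∑ k ∈ Finset.range d, (d - 1 - k) := by
      rw [Fin.sum_univ_eq_sum_range]
    have h2 : ∑ k ∈ Finset.range d, (d - 1 - k) = ∑ k ∈ Finset.range d, k :=
      Finset.sum_range_reflect (fun k => k) d
    have h3 := Finset.sum_range_id_mul_two d
    have h4 : (∑ i : Fin d, (d - 1 - (i : ℕ))) * 2 = d * (d - 1) := by
      rw [h1, h2, h3]
    have h5 := congrArg (fun x : ℕ => (x : ℚ)) h4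
    push_cast [Nat.cast_sub hd] at h5
    push_cast
    linarith

lemma prod_range_fact (n : ℕ) : ∏ k ∈ Finset.range n, (k + 1) = n.factorial := by
  induction n with
  | zero => simp
  | succ n ih => rw [Finset.prod_range_succ, ih, Nat.factorial_succ, Nat.mul_comm]

lemma base_prod (d : ℕ) :
    vand (fun i : Fin d => ((d - 1 - (i : ℕ) : ℕ) : ℚ))
      = ∏ i : Fin d, ((d - 1 - (i : ℕ)).factorial : ℚ) := by
  classical
  have hfact : ∀ i : Fin d, ∏ j ∈ Finset.Ioi i, ((j : ℕ) - (i : ℕ)) = (d - 1 - (i : ℕ)).factorial := by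
    intro i
    have hbij : ∏ j ∈ Finset.Ioi i, ((j : ℕ) - (i : ℕ))
        = ∏ k ∈ Finset.range (d - 1 - (i : ℕ)), (k + 1) := by
      refine Finset.prod_bij' (fun j _ => (j : ℕ) - (i : ℕ) - 1)
        (fun k hk => (⟨(i : ℕ) + 1 + k, by
          simp only [Finset.mem_range] at hk
          omega⟩ : Fin d)) ?_ ?_ ?_ ?_ ?_
      · intro j hj
        simp only [Finset.mem_Ioi] at hj
        simp only [Finset.mem_range]
        have h1 : (i : ℕ) < (j : ℕ) := hj
        have h2 : (j : ℕ) < d := j.isLt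
        omega
      · intro k hk
        simp only [Finset.mem_range] at hk
        simp only [Finset.mem_Ioi]
        rw [Fin.lt_def]
        dsimp only
        omega
      · intro j hj
        simp only [Finset.mem_Ioi] at hj
        have h1 : (i : ℕ) < (j : ℕ) := hj
        apply Fin.ext
        dsimp only
        omega
      · intro k hk
        simp only [Finset.mem_range] at hk
        dsimp only
        omega
      · intro j hj
        simp only [Finset.mem_Ioi] at hj
        have h1 : (i : ℕ) < (j : ℕ) := hj
        try dsimp only
        omega
    rw [hbij, prod_range_fact]
  have hN : ∏ p ∈ pairs d, ((p.2 : ℕ) - (p.1 : ℕ)) = ∏ i : Fin d, (d - 1 - (i : ℕ)).factorial := by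
    have h1 : ∏ p ∈ pairs d, ((p.2 : ℕ) - (p.1 : ℕ))
        = ∏ i : Fin d, ∏ j ∈ Finset.Ioi i, ((j : ℕ) - (i : ℕ)) := by
      rw [← Finset.prod_sigma Finset.univ (fun i : Fin d => Finset.Ioi i)
        (fun x => ((x.2 : ℕ) - (x.1 : ℕ)))]
      refine Finset.prod_bij' (fun (p : Fin d × Fin d) _ => (⟨p.1, p.2⟩ : Σ _ : Fin d, Fin d))
        (fun x _ => (x.1, x.2)) ?_ ?_ ?_ ?_ ?_
      · intro p hp
        simp only [pairs, Finset.mem_filter, Finset.mem_univ, true_and] at hp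
        simp only [Finset.mem_sigma, Finset.mem_univ, true_and, Finset.mem_Ioi]
        exact hp
      · intro x hx
        simp only [Finset.mem_sigma, Finset.mem_univ, true_and, Finset.mem_Ioi] at hx
        simp only [pairs, Finset.mem_filter, Finset.mem_univ, true_and]
        exact hx
      · intro p hp; rfl
      · intro x hx; rfl
      · intro p hp; rfl
    rw [h1]
    exact Finset.prod_congr rfl fun i _ => hfact i
  have hfac : ∀ p ∈ pairs d,
      ((d - 1 - ((p : Fin d × Fin d).1 : ℕ) : ℕ) : ℚ) - ((d - 1 - (p.2 : ℕ) : ℕ) : ℚ)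
        = (((p.2 : ℕ) - (p.1 : ℕ) : ℕ) : ℚ) := by
    intro p hp
    have h1 : p.1 < p.2 := (Finset.mem_filter.mp hp).2
    have hlt : (p.1 : ℕ) < (p.2 : ℕ) := h1
    have h2 : (p.2 : ℕ) < d := p.2.isLt
    have he : (d - 1 - (p.1 : ℕ)) = (d - 1 - (p.2 : ℕ)) + ((p.2 : ℕ) - (p.1 : ℕ)) := by omega
    rw [he]
    push_cast
    ring
  calc vand (fun i : Fin d => ((d - 1 - (i : ℕ) : ℕ) : ℚ))
      = ∏ p ∈ pairs d, (((p.2 : ℕ) - (p.1 : ℕ) : ℕ) : ℚ) := Finset.prod_congr rfl hfac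
    _ = (((∏ p ∈ pairs d, ((p.2 : ℕ) - (p.1 : ℕ))) : ℕ) : ℚ) := by rw [Nat.cast_prod]
    _ = _ := by rw [hN, Nat.cast_prod]

/-! ### Main induction -/

lemma key (d : ℕ) : ∀ (N : ℕ) (n : Fin d → ℕ), (∀ i j : Fin d, i ≤ j → n j ≤ n i) →
    (∑ i, n i = N) →
    (ballotWalks d n : ℚ) =
      vand (fun i : Fin d => ((n i + (d - 1 - (i : ℕ)) : ℕ) : ℚ)) * (Nat.factorial N : ℚ) /
        ∏ i : Fin d, ((n i + (d - 1 - (i : ℕ))).factorial : ℚ) := by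
  intro N
  induction N with
  | zero =>
    intro n hmono hsum
    have hn : ∀ i, n i = 0 := fun i => by
      have := (Finset.sum_eq_zero_iff).mp hsum i (mem_univ i)
      exact this
    rw [ballot_eq d n 0 hsum]
    have hone : Nat.card {g : Fin 0 → Fin d // IsWalk d 0 n g} = 1 := by
      haveI : Unique {g : Fin 0 → Fin d // IsWalk d 0 n g} :=
        { default := ⟨fun t => t.elim0, by
            constructor
            · intro k i j hij
              simp
            · intro jj
              simp [hn jj]⟩
          uniq := fun a => Subtype.ext (funext fun t => t.elim0) }
      exact Nat.card_unique
    rw [hone]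
    simp only [hn, zero_add, Nat.factorial_zero, Nat.cast_one, mul_one]
    rw [base_prod d]
    have hfne : (∏ i : Fin d, ((d - 1 - (i : ℕ)).factorial : ℚ)) ≠ 0 := by
      rw [Finset.prod_ne_zero_iff]
      intro i _
      exact Nat.cast_ne_zero.mpr (Nat.factorial_ne_zero _)
    rw [div_self hfne]
  | succ M IH =>
    intro n hmono hsum
    set L : Fin d → ℕ := fun i => n i + (d - 1 - (i : ℕ)) with hL
    set v : Fin d → ℚ := fun i => (L i : ℚ) with hv
    have hmonoL : ∀ i j : Fin d, i < j → L j < L i := by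
      intro i j hij
      have h1 := hmono i j (le_of_lt hij)
      have h2 : (i : ℕ) < (j : ℕ) := hij
      have h3 : (j : ℕ) < d := j.isLt
      simp only [hL]
      omega
    have hvinj : Function.Injective v := by
      intro a b hab
      have hab' : L a = L b := Nat.cast_inj.mp hab
      by_contra hne
      rcases lt_or_gt_of_ne hne with h | h
      · exact absurd hab' (by have := hmonoL a b h; omega)
      · exact absurd hab' (by have := hmonoL b a h; omega)
    have hfac_ne : (∏ i : Fin d, ((L i).factorial : ℚ)) ≠ 0 := by
      rw [Finset.prod_ne_zero_iff]
      intro i _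
      exact Nat.cast_ne_zero.mpr (Nat.factorial_ne_zero _)
    rw [ballot_eq d n (M + 1) hsum, walk_rec n hmono hsum, Nat.cast_sum]
    have hterm : ∀ j : Fin d,
        ((Nat.card {g : Fin M → Fin d // IsWalk d M (Function.update n j (n j - 1)) g} : ℕ) : ℚ)
          = v j * vand (Function.update v j (v j - 1)) * (Nat.factorial M : ℚ) /
            ∏ i : Fin d, ((L i).factorial : ℚ) := by
      intro j
      by_cases hnj : n j = 0
      · have hupd : Function.update n j (n j - 1) = n := Function.update_eq_self_iff.mpr (by omega)
        rw [hupd]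
        haveI : IsEmpty {g : Fin M → Fin d // IsWalk d M n g} := isEmpty_of_sum (by omega)
        rw [Nat.card_of_isEmpty, Nat.cast_zero]
        by_cases hj1 : (j : ℕ) + 1 < d
        · set j' : Fin d := ⟨(j : ℕ) + 1, hj1⟩ with hj'
          have hjj' : j < j' := by rw [Fin.lt_def]; simp [hj']
          have hnj' : n j' = 0 := by
            have := hmono j j' (le_of_lt hjj')
            omega
          have hfac0 : vand (Function.update v j (v j - 1)) = 0 := by
            rw [vand]
            apply Finset.prod_eq_zero (i := ((j, j') : Fin d × Fin d))
            · simp only [pairs, Finset.mem_filter, Finset.mem_univ, true_and]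
              exact hjj'
            · have hne2 : j' ≠ j := ne_of_gt hjj'
              show Function.update v j (v j - 1) j - Function.update v j (v j - 1) j' = 0
              rw [Function.update_self, Function.update_of_ne hne2]
              have hvalj : (j' : ℕ) = (j : ℕ) + 1 := rfl
              have hLL : L j = L j' + 1 := by
                simp only [hL]
                omega
              simp only [hv, hLL]
              push_cast
              ring
          rw [hfac0]
          simp
        · have hvj : v j = 0 := by
            have hLj : L j = 0 := by
              simp only [hL]
              omega
            simp [hv, hLj]
          rw [hvj]
          simp
      · set n' := Function.update n j (n j - 1) with hn'
        have hsum' : ∑ i, n' i = M := by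
          rw [hn', Finset.sum_update_of_mem (mem_univ j)]
          rw [← Finset.add_sum_erase Finset.univ n (mem_univ j), Finset.erase_eq] at hsum
          omega
        by_cases hval : ∀ h : (j : ℕ) + 1 < d, n ⟨(j : ℕ) + 1, h⟩ < n j
        · -- valid corner removal: use the induction hypothesis
          have hmono' : ∀ i i' : Fin d, i ≤ i' → n' i' ≤ n' i := by
            intro i i' hii'
            rcases eq_or_lt_of_le hii' with rfl | hlt
            · exact le_rfl
            · by_cases hij : i = j
              · subst hij
                have hj1 : (i : ℕ) + 1 < d := by
                  have h1 : (i : ℕ) < (i' : ℕ) := hlt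
                  have h2 : (i' : ℕ) < d := i'.isLt
                  omega
                have hstep : n ⟨(i : ℕ) + 1, hj1⟩ < n i := hval hj1
                have hch : n i' ≤ n ⟨(i : ℕ) + 1, hj1⟩ := by
                  apply hmono
                  rw [Fin.le_def]
                  simp only
                  have h1 : (i : ℕ) < (i' : ℕ) := hlt
                  omega
                rw [hn', Function.update_self, Function.update_of_ne (ne_of_gt hlt)]
                omega
              · rw [hn', Function.update_of_ne hij]
                have h2 : n' i' ≤ n i' := by
                  by_cases h3 : i' = j
                  · subst h3
                    rw [hn', Function.update_self]
                    omega
                  · rw [hn', Function.update_of_ne h3]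
                exact le_trans h2 (hmono i i' hii')
          have hIH := IH n' hmono' hsum'
          rw [← ballot_eq d n' M hsum', hIH]
          have hv' : (fun i : Fin d => ((n' i + (d - 1 - (i : ℕ)) : ℕ) : ℚ))
              = Function.update v j (v j - 1) := by
            funext i
            by_cases hij : i = j
            · subst hij
              rw [Function.update_self, hn', Function.update_self]
              simp only [hv, hL]
              rw [show n i + (d - 1 - (i : ℕ)) = (n i - 1 + (d - 1 - (i : ℕ))) + 1 by omega]
              push_cast
              ring
            · rw [Function.update_of_ne hij, hn', Function.update_of_ne hij]
          have hprod : (∏ i : Fin d, ((n' i + (d - 1 - (i : ℕ))).factorial : ℚ)) * v j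
              = ∏ i : Fin d, ((L i).factorial : ℚ) := by
            rw [← Finset.prod_erase_mul Finset.univ _ (mem_univ j),
              ← Finset.prod_erase_mul Finset.univ (fun i : Fin d => ((L i).factorial : ℚ))
                (mem_univ j)]
            have herase : ∏ i ∈ Finset.univ.erase j, ((n' i + (d - 1 - (i : ℕ))).factorial : ℚ)
                = ∏ i ∈ Finset.univ.erase j, ((L i).factorial : ℚ) := by
              refine Finset.prod_congr rfl fun i hi => ?_
              rw [hn', Function.update_of_ne (Finset.mem_erase.mp hi).1]
            rw [herase]
            have hj1 : n' j + (d - 1 - (j : ℕ)) = L j - 1 := by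
              rw [hn', Function.update_self]
              simp only [hL]
              omega
            have hLj : L j = (L j - 1) + 1 := by
              simp only [hL]
              omega
            have hstep : ((L j).factorial : ℚ) = ((L j - 1).factorial : ℚ) * v j := by
              conv_lhs => rw [hLj]
              rw [Nat.factorial_succ]
              push_cast
              simp only [hv]
              rw [show ((L j : ℕ) : ℚ) = ((L j - 1 : ℕ) : ℚ) + 1 by
                conv_lhs => rw [hLj]
                push_cast
                ring]
              ring
            rw [hj1, hstep]
            ring
          rw [hv']
          have hne' : (∏ i : Fin d, ((n' i + (d - 1 - (i : ℕ))).factorial : ℚ)) ≠ 0 := by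
            rw [Finset.prod_ne_zero_iff]
            intro i _
            exact Nat.cast_ne_zero.mpr (Nat.factorial_ne_zero _)
          rw [div_eq_div_iff hne' hfac_ne]
          linear_combination (-(vand (Function.update v j (v j - 1)) * (Nat.factorial M : ℚ))) * hprod
        · push_neg at hval
          obtain ⟨hj1, hge⟩ := hval
          set j' : Fin d := ⟨(j : ℕ) + 1, hj1⟩ with hj'
          have hjj' : j < j' := by rw [Fin.lt_def]; simp [hj']
          have heq : n j' = n j := le_antisymm (hmono j j' (le_of_lt hjj')) hge
          haveI : IsEmpty {g : Fin M → Fin d // IsWalk d M n' g} := by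
            apply isEmpty_of_bad (i := j) (j := j') (le_of_lt hjj')
            rw [hn', Function.update_self, Function.update_of_ne (ne_of_gt hjj')]
            omega
          rw [Nat.card_of_isEmpty, Nat.cast_zero]
          have hfac0 : vand (Function.update v j (v j - 1)) = 0 := by
            rw [vand]
            apply Finset.prod_eq_zero (i := ((j, j') : Fin d × Fin d))
            · simp only [pairs, Finset.mem_filter, Finset.mem_univ, true_and]
              exact hjj'
            · show Function.update v j (v j - 1) j - Function.update v j (v j - 1) j' = 0
              rw [Function.update_self, Function.update_of_ne (ne_of_gt hjj')]
              have hvalj : (j' : ℕ) = (j : ℕ) + 1 := rfl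
              have hLL : L j = L j' + 1 := by
                simp only [hL]
                omega
              simp only [hv, hLL]
              push_cast
              ring
          rw [hfac0]
          simp
    rw [Finset.sum_congr rfl fun j _ => hterm j]
    rw [← Finset.sum_div, ← Finset.sum_mul, star v hvinj]
    have hSv : (∑ i, v i) - (d : ℚ) * ((d : ℚ) - 1) / 2 = (M : ℚ) + 1 := by
      have h1 : ∑ i, v i = ((∑ i, L i : ℕ) : ℚ) := by
        rw [Nat.cast_sum]
      have h2 : ∑ i, L i = (M + 1) + ∑ i : Fin d, (d - 1 - (i : ℕ)) := by
        simp only [hL]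
        rw [Finset.sum_add_distrib, hsum]
      rw [h1, h2, Nat.cast_add, gauss_q]
      push_cast
      ring
    rw [hSv, Nat.factorial_succ]
    push_cast
    ring

end YFM

/-- The Young–Frobenius–MacMahon hook-type product formula for the number of standard
Young tableaux of shape `(n₁ ≥ n₂ ≥ ... ≥ n_d ≥ 0)`. -/
theorem young_frobenius_macmahon (d : ℕ) (n : Fin d → ℕ)
    (hmono : ∀ i j : Fin d, i ≤ j → n j ≤ n i) :
    (ballotWalks d n : ℚ) =
      (∏ p ∈ Finset.univ.filter (fun p : Fin d × Fin d => p.1 < p.2),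
          ((n p.1 : ℚ) - (n p.2 : ℚ) + (p.2 : ℕ) - (p.1 : ℕ))) *
        (Nat.factorial (∑ i, n i) : ℚ) /
          ∏ i : Fin d, (Nat.factorial (n i + (d - 1 - (i : ℕ))) : ℚ) := by
  have h := YFM.key d (∑ i, n i) n hmono rfl
  rw [h]
  have hprod : (∏ p ∈ Finset.univ.filter (fun p : Fin d × Fin d => p.1 < p.2),
      ((n p.1 : ℚ) - (n p.2 : ℚ) + (p.2 : ℕ) - (p.1 : ℕ)))
      = YFM.vand (fun i : Fin d => ((n i + (d - 1 - (i : ℕ)) : ℕ) : ℚ)) := by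
    rw [YFM.vand, YFM.pairs]
    refine Finset.prod_congr rfl fun p hp => ?_
    have h1 : p.1 < p.2 := (Finset.mem_filter.mp hp).2
    have hlt : (p.1 : ℕ) < (p.2 : ℕ) := h1
    have h2 : (p.2 : ℕ) < d := p.2.isLt
    have he : (d - 1 - (p.1 : ℕ)) = (d - 1 - (p.2 : ℕ)) + ((p.2 : ℕ) - (p.1 : ℕ)) := by omega
    rw [show n p.1 + (d - 1 - (p.1 : ℕ))
        = n p.1 + ((d - 1 - (p.2 : ℕ)) + ((p.2 : ℕ) - (p.1 : ℕ))) by rw [← he]]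
    push_cast [Nat.cast_sub (le_of_lt hlt)]
    ring
  rw [hprod]
end

section
/- The number of lattice walks of length 2n in the quarter plane starting and ending at the origin using the step set S = {(0,1),(1,1),(-1,-1)} equals 4^n (1/2)_n / (1)_{n+1}, i.e., the Catalan number C(2n,n)/(n+1). -/
open Finset

/-- Number of quarter-plane walks of length `m` from `(0,0)` to `e` with steps in `S`:
sequences of `m` steps, each in `S`, all partial sums having nonnegative coordinates,
with total sum `e`. -/
noncomputable def qpWalks (S : Set (ℤ × ℤ)) (m : ℕ) (e : ℤ × ℤ) : ℕ :=
  Nat.card {f : Fin m → ℤ × ℤ //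
    (∀ i, f i ∈ S) ∧
    (∀ k : ℕ,
      0 ≤ (∑ i ∈ Finset.univ.filter (fun i : Fin m => (i : ℕ) < k), f i).1 ∧
      0 ≤ (∑ i ∈ Finset.univ.filter (fun i : Fin m => (i : ℕ) < k), f i).2) ∧
    (∑ i, f i) = e}

section aux
open DyckStep List

/-- Map a step to a Dyck step. -/
def stepMap : ℤ × ℤ → DyckStep := fun s => if s = (1,1) then U else D

lemma count_sub_count (l : List (ℤ × ℤ)) (h : ∀ s ∈ l, s = (1,1) ∨ s = (-1,-1)) :
    ((l.map stepMap).count U : ℤ) - ((l.map stepMap).count D : ℤ) = l.sum.1 := by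
  induction l with
  | nil => simp
  | cons a t ih =>
    have ha := h a (by simp)
    have ht := ih (fun s hs => h s (by simp [hs]))
    rcases ha with ha | ha <;>
      simp [ha, stepMap, List.count_cons, ← ht] <;> ring

section walkcard

variable {n : ℕ}

abbrev WalkTy (n : ℕ) := {f : Fin (2*n) → ℤ × ℤ //
    (∀ i, f i ∈ ({(0,1), (1,1), (-1,-1)} : Set (ℤ × ℤ))) ∧
    (∀ k : ℕ,
      0 ≤ (∑ i ∈ Finset.univ.filter (fun i : Fin (2*n) => (i : ℕ) < k), f i).1 ∧
      0 ≤ (∑ i ∈ Finset.univ.filter (fun i : Fin (2*n) => (i : ℕ) < k), f i).2) ∧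
    (∑ i, f i) = (0, 0)}

lemma walk_dichotomy (x : WalkTy n) : ∀ i, x.1 i = (1,1) ∨ x.1 i = (-1,-1) := by
  obtain ⟨f, hS, hpre, hsum⟩ := x
  have h0 : ∑ i, ((f i).2 - (f i).1) = 0 := by
    rw [Finset.sum_sub_distrib, ← Prod.snd_sum, ← Prod.fst_sum, hsum]
    simp
  have hterm : ∀ i ∈ Finset.univ, (0:ℤ) ≤ (f i).2 - (f i).1 := by
    intro i _
    rcases hS i with h | h | h <;>
      [skip; skip; rw [Set.mem_singleton_iff] at h] <;> rw [h] <;> norm_num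
  have hz := (Finset.sum_eq_zero_iff_of_nonneg hterm).mp h0
  intro i
  rcases hS i with h | h | h
  · exfalso
    have := hz i (Finset.mem_univ i)
    rw [h] at this
    norm_num at this
  · exact Or.inl h
  · exact Or.inr (Set.mem_singleton_iff.mp h)

lemma mem_ofFn_dich (x : WalkTy n) :
    ∀ s ∈ List.ofFn x.1, s = (1,1) ∨ s = (-1,-1) := by
  intro s hs
  rw [List.mem_ofFn] at hs
  obtain ⟨i, rfl⟩ := hs
  exact walk_dichotomy x i

/-- The Dyck word associated to a closed walk. -/
def toWord (x : WalkTy n) : DyckWord where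
  toList := (List.ofFn x.1).map stepMap
  count_U_eq_count_D := by
    have h := count_sub_count (List.ofFn x.1) (mem_ofFn_dich x)
    rw [List.sum_ofFn, x.2.2.2] at h
    omega
  count_D_le_count_U := by
    intro k
    have hmt : ((List.ofFn x.1).map stepMap).take k = ((List.ofFn x.1).take k).map stepMap := by
      rw [List.map_take]
    have h := count_sub_count ((List.ofFn x.1).take k)
      (fun s hs => mem_ofFn_dich x s (List.mem_of_mem_take hs))
    rw [List.sum_take_ofFn] at h
    have h2 := (x.2.2.1 k).1
    rw [hmt]
    omega

lemma toWord_semilength (x : WalkTy n) : (toWord x).semilength = n := by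
  have h : 2 * (toWord x).semilength = ((List.ofFn x.1).map stepMap).length :=
    (toWord x).two_mul_semilength_eq_length
  simp only [List.length_map, List.length_ofFn] at h
  omega

lemma walk_card (n : ℕ) :
    qpWalks {(0,1), (1,1), (-1,-1)} (2 * n) (0, 0) = catalan n := by
  rw [qpWalks, ← DyckWord.card_dyckWord_semilength_eq_catalan, ← Nat.card_eq_fintype_card]
  apply Nat.card_eq_of_bijective (fun x : WalkTy n => (⟨toWord x, toWord_semilength x⟩ :
    { p : DyckWord // p.semilength = n }))
  constructor
  · rintro ⟨f, hf⟩ ⟨g, hg⟩ h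
    simp only [Subtype.mk_eq_mk, DyckWord.ext_iff, toWord] at h
    apply Subtype.ext
    funext i
    show f i = g i
    have hi := List.getElem_of_eq h
      (show (i:ℕ) < (List.map stepMap (List.ofFn f)).length by simp [i.2])
    simp only [List.getElem_map, List.getElem_ofFn, Fin.eta] at hi
    have d1 := walk_dichotomy ⟨f, hf⟩ i
    have d2 := walk_dichotomy ⟨g, hg⟩ i
    simp only at d1 d2
    rcases d1 with d1 | d1 <;> rcases d2 with d2 | d2 <;>
      rw [d1, d2] at hi <;> rw [d1, d2] <;>
      first | rfl | simp [stepMap, Prod.ext_iff] at hi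
  · rintro ⟨p, hp⟩
    have hlen : p.toList.length = 2 * n := by
      have := p.two_mul_semilength_eq_length
      omega
    set f : Fin (2*n) → ℤ × ℤ := fun i =>
      if p.toList[(i:ℕ)]'(by rw [hlen]; exact i.2) = U then (1,1) else (-1,-1) with hf
    have hdich : ∀ i, f i = (1,1) ∨ f i = (-1,-1) := by
      intro i; rw [hf]; dsimp only; split <;> simp
    have hmap : (List.ofFn f).map stepMap = p.toList := by
      apply List.ext_getElem (by simp [hlen])
      intro i h1 h2
      simp only [List.getElem_map, List.getElem_ofFn, hf]
      rcases (p.toList[i]'h2).dichotomy with h | h <;> simp [h, stepMap]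
    have hsnd : ∀ i, (f i).2 = (f i).1 := by
      intro i; rcases hdich i with h | h <;> simp [h]
    have key : ∀ k, ((List.ofFn f).take k).sum.1 =
        ((p.toList.take k).count U : ℤ) - ((p.toList.take k).count D : ℤ) := by
      intro k
      rw [← count_sub_count ((List.ofFn f).take k)
        (fun s hs => by
          obtain ⟨i, rfl⟩ := List.mem_ofFn.mp (List.mem_of_mem_take hs)
          exact hdich i),
        List.map_take, hmap]
    have hprefix1 : ∀ k, 0 ≤ (∑ i ∈ Finset.univ.filter
        (fun i : Fin (2*n) => (i : ℕ) < k), f i).1 := by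
      intro k
      rw [← List.sum_take_ofFn, key k]
      have := p.count_D_le_count_U k
      omega
    have hsum1 : (∑ i, f i).1 = 0 := by
      have h := count_sub_count (List.ofFn f)
        (fun s hs => by obtain ⟨i, rfl⟩ := List.mem_ofFn.mp hs; exact hdich i)
      rw [hmap, p.count_U_eq_count_D, List.sum_ofFn] at h
      omega
    have hsnd_sum : ∀ s : Finset (Fin (2*n)), (∑ i ∈ s, f i).2 = (∑ i ∈ s, f i).1 := by
      intro s
      rw [Prod.fst_sum, Prod.snd_sum]
      exact Finset.sum_congr rfl (fun i _ => hsnd i)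
    refine ⟨⟨f, ?_, ?_, ?_⟩, ?_⟩
    · intro i
      rcases hdich i with h | h <;> simp [h]
    · intro k
      refine ⟨hprefix1 k, ?_⟩
      rw [hsnd_sum]
      exact hprefix1 k
    · apply Prod.ext <;> simp only [hsum1, hsnd_sum Finset.univ] <;> rfl
    · apply Subtype.ext
      apply DyckWord.ext
      exact hmap

end walkcard

lemma asc_eval_one (n : ℕ) : (ascPochhammer ℚ n).eval 1 = n.factorial := by
  induction n with
  | zero => simp
  | succ n ih =>
    rw [ascPochhammer_succ_right, Polynomial.eval_mul, ih, Polynomial.eval_add,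
      Polynomial.eval_X, Polynomial.eval_natCast, Nat.factorial_succ]
    push_cast
    ring

lemma asc_eval_half (n : ℕ) :
    (4:ℚ) ^ n * (ascPochhammer ℚ n).eval (1/2) =
      ((2*n).factorial : ℚ) / (n.factorial : ℚ) := by
  induction n with
  | zero => simp
  | succ n ih =>
    have hn : ((n.factorial : ℚ)) ≠ 0 := by positivity
    have hn1 : (((n+1).factorial : ℚ)) ≠ 0 := by positivity
    rw [ascPochhammer_succ_right, Polynomial.eval_mul, Polynomial.eval_add,
      Polynomial.eval_X, Polynomial.eval_natCast]
    have h2 : 2*(n+1) = (2*n+1) + 1 := by ring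
    rw [h2, Nat.factorial_succ, Nat.factorial_succ, Nat.factorial_succ]
    have : (4:ℚ)^(n+1) * ((ascPochhammer ℚ n).eval (1/2) * (1/2 + n)) =
        ((4:ℚ)^n * (ascPochhammer ℚ n).eval (1/2)) * (4 * (1/2 + n)) := by ring
    rw [this, ih]
    field_simp
    push_cast
    ring

end aux

open DyckStep List

theorem closed_walks_step_set_2 (n : ℕ) :
    (qpWalks {(0,1), (1,1), (-1,-1)} (2 * n) (0, 0) : ℚ) =
        4 ^ n * (ascPochhammer ℚ n).eval (1/2) / (ascPochhammer ℚ (n + 1)).eval 1 ∧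
    (qpWalks {(0,1), (1,1), (-1,-1)} (2 * n) (0, 0) : ℚ) =
        ((2 * n).choose n : ℚ) / (n + 1) := by
  have hc : (qpWalks {(0,1), (1,1), (-1,-1)} (2 * n) (0, 0) : ℚ) = catalan n := by
    rw [walk_card n]
  have hcat : ((catalan n : ℚ)) = ((2 * n).choose n : ℚ) / (n + 1) := by
    have h := succ_mul_catalan_eq_centralBinom n
    have : ((n:ℚ) + 1) * catalan n = (2*n).choose n := by
      rw [Nat.centralBinom] at h
      exact_mod_cast congrArg (Nat.cast : ℕ → ℚ) h
    field_simp at this ⊢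
    linarith [this]
  have hchoose : ((2*n).choose n : ℚ) = ((2*n).factorial : ℚ) /
      ((n.factorial : ℚ) * (n.factorial : ℚ)) := by
    rw [Nat.cast_choose ℚ (by omega : n ≤ 2*n), show 2*n - n = n from by omega]
  refine ⟨?_, by rw [hc, hcat]⟩
  rw [hc, hcat, asc_eval_half, asc_eval_one, hchoose, Nat.factorial_succ]
  have hn : ((n.factorial : ℚ)) ≠ 0 := by positivity
  field_simp
  all_goals first | exact Or.inl (by ring) | exact Or.inl trivial | (push_cast; ring)
end

section
/- The number of lattice walks of length 2n in the quarter plane starting and ending at the origin using the step set S = {(0,1),(0,-1),(1,-1)} equals the Catalan number C(2n,n)/(n+1), and walks of odd length returning to the origin do not exist. -/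
open Finset

open DyckStep List

private def stepVal : DyckStep → ℤ × ℤ
  | U => (0, 1)
  | D => (0, -1)

private abbrev WalkP (m : ℕ) (f : Fin m → ℤ × ℤ) : Prop :=
  (∀ i, f i ∈ ({(0,1), (0,-1), (1,-1)} : Set (ℤ × ℤ))) ∧
  (∀ k : ℕ,
    0 ≤ (∑ i ∈ Finset.univ.filter (fun i : Fin m => (i : ℕ) < k), f i).1 ∧
    0 ≤ (∑ i ∈ Finset.univ.filter (fun i : Fin m => (i : ℕ) < k), f i).2) ∧
  (∑ i, f i) = ((0 : ℤ), (0 : ℤ))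

private lemma sum_map_stepVal (l : List DyckStep) :
    (l.map stepVal).sum = (0, (l.count U : ℤ) - l.count D) := by
  induction l with
  | nil => simp; rfl
  | cons a l ih =>
    cases a <;>
      simp [stepVal, ih, List.count_cons, Prod.ext_iff] <;> ring

private lemma key_sum {m : ℕ} (s : Fin m → DyckStep) (k : ℕ) :
    ∑ i ∈ Finset.univ.filter (fun i : Fin m => (i : ℕ) < k), stepVal (s i)
      = (0, ((((List.ofFn s).take k).count U : ℤ) - ((List.ofFn s).take k).count D)) := by
  rw [← List.sum_take_ofFn (fun i => stepVal (s i)) k,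
    show (List.ofFn fun i => stepVal (s i)) = (List.ofFn s).map stepVal from
      (List.map_ofFn (f := s) (g := stepVal)).symm, ← List.map_take, sum_map_stepVal]

private lemma stepVal_fiber (x : DyckStep) :
    (if stepVal x = ((0 : ℤ), (1 : ℤ)) then U else D) = x := by
  cases x <;> simp [stepVal]

private lemma stepVal_mem (x : DyckStep) :
    stepVal x ∈ ({(0,1), (0,-1), (1,-1)} : Set (ℤ × ℤ)) := by
  cases x <;> simp [stepVal]

private def toSteps {m : ℕ} (f : Fin m → ℤ × ℤ) : Fin m → DyckStep :=
  fun i => if f i = (0, 1) then U else D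

private lemma eq_stepVal_toSteps {m : ℕ} {f : Fin m → ℤ × ℤ} (hf : WalkP m f) (i : Fin m) :
    f i = stepVal (toSteps f i) := by
  obtain ⟨hS, hpre, hsum⟩ := hf
  simp only [Set.mem_insert_iff, Set.mem_singleton_iff] at hS
  have hfst0 : ∀ i ∈ Finset.univ, (0:ℤ) ≤ (f i).1 := by
    intro i _; rcases hS i with h | h | h <;> simp [h]
  have hsum1 : ∑ i, (f i).1 = 0 := by rw [← Prod.fst_sum, hsum]
  have hzero : ∀ j, (f j).1 = 0 := fun j =>
    (Finset.sum_eq_zero_iff_of_nonneg hfst0).1 hsum1 j (Finset.mem_univ j)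
  rcases hS i with h | h | h
  · simp [toSteps, h, stepVal]
  · have : f i ≠ (0, 1) := by rw [h]; decide
    simp [toSteps, h, this, stepVal]
  · exfalso; have := hzero i; rw [h] at this; simp at this

private lemma key_sum' {m : ℕ} {f : Fin m → ℤ × ℤ} (hf : WalkP m f) (k : ℕ) :
    ∑ i ∈ Finset.univ.filter (fun i : Fin m => (i : ℕ) < k), f i
      = (0, ((((List.ofFn (toSteps f)).take k).count U : ℤ)
            - ((List.ofFn (toSteps f)).take k).count D)) := by
  rw [Finset.sum_congr rfl (fun i _ => eq_stepVal_toSteps hf i)]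
  exact key_sum (toSteps f) k

private def toDyck {m : ℕ} (f : Fin m → ℤ × ℤ) (hf : WalkP m f) : DyckWord where
  toList := List.ofFn (toSteps f)
  count_U_eq_count_D := by
    have := key_sum' hf m
    rw [Finset.filter_true_of_mem (fun i _ => i.isLt), hf.2.2,
      List.take_of_length_le (by simp)] at this
    have h2 := congrArg Prod.snd this
    simp only at h2
    omega
  count_D_le_count_U := by
    intro k
    have h1 := key_sum' hf k
    have h2 := (hf.2.1 k).2
    rw [h1] at h2
    simp only at h2
    omega

private def walkEquiv (m : ℕ) :
    {f : Fin m → ℤ × ℤ // WalkP m f} ≃ {p : DyckWord // p.toList.length = m} where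
  toFun fp := ⟨toDyck fp.1 fp.2, by simp [toDyck]⟩
  invFun pq :=
    ⟨fun i => stepVal (pq.1.toList.get (Fin.cast pq.2.symm i)), by
      obtain ⟨p, hlen⟩ := pq
      subst hlen
      have hofn : (List.ofFn fun i => p.toList.get (Fin.cast rfl i)) = p.toList := by
        simpa using List.ofFn_get p.toList
      refine ⟨fun i => stepVal_mem _, ?_, ?_⟩
      · intro k
        have h1 := key_sum (fun i => p.toList.get (Fin.cast rfl i)) k
        rw [hofn] at h1
        rw [h1]
        refine ⟨le_refl 0, ?_⟩
        have := p.count_D_le_count_U k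
        simp only
        omega
      · have h1 := key_sum (fun i => p.toList.get (Fin.cast rfl i)) p.toList.length
        rw [hofn, List.take_of_length_le le_rfl,
          Finset.filter_true_of_mem (fun i _ => i.isLt)] at h1
        rw [h1, p.count_U_eq_count_D]
        simp⟩
  left_inv := by
    rintro ⟨f, hf⟩
    apply Subtype.ext
    funext i
    show stepVal ((List.ofFn (toSteps f)).get _) = f i
    convert (eq_stepVal_toSteps hf i).symm using 2
    exact (List.get_ofFn _ _).trans rfl
  right_inv := by
    rintro ⟨p, hlen⟩
    subst hlen
    apply Subtype.ext
    apply DyckWord.ext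
    show List.ofFn (toSteps _) = p.toList
    have : toSteps (fun i => stepVal (p.toList.get (Fin.cast rfl i)))
        = fun i => p.toList.get (Fin.cast rfl i) := by
      funext i
      exact stepVal_fiber _
    rw [this]
    simpa using List.ofFn_get p.toList

private lemma qpWalks_eq_card (m : ℕ) :
    qpWalks {(0,1), (0,-1), (1,-1)} m (0, 0)
      = Nat.card {p : DyckWord // p.toList.length = m} :=
  Nat.card_congr (walkEquiv m)

theorem closed_walks_step_set_4 :
    (∀ n : ℕ, (qpWalks {(0,1), (0,-1), (1,-1)} (2 * n) (0, 0) : ℚ) =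
        ((2 * n).choose n : ℚ) / (n + 1)) ∧
    (∀ m : ℕ, Odd m → qpWalks {(0,1), (0,-1), (1,-1)} m (0, 0) = 0) := by
  constructor
  · intro n
    rw [qpWalks_eq_card]
    have he : ∀ p : DyckWord, p.toList.length = 2 * n ↔ p.semilength = n := by
      intro p
      rw [← p.two_mul_semilength_eq_length]
      omega
    have : Nat.card {p : DyckWord // p.toList.length = 2 * n}
        = Nat.card {p : DyckWord // p.semilength = n} :=
      Nat.card_congr (Equiv.subtypeEquivRight he)
    rw [this, Nat.card_eq_fintype_card, DyckWord.card_dyckWord_semilength_eq_catalan]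
    have hc := succ_mul_catalan_eq_centralBinom n
    have : ((n : ℚ) + 1) * catalan n = (2 * n).choose n := by
      have := congrArg (Nat.cast : ℕ → ℚ) hc
      push_cast at this
      rw [Nat.centralBinom] at this
      push_cast at this ⊢
      linarith
    have hn : (n : ℚ) + 1 ≠ 0 := by positivity
    field_simp
    linarith
  · intro m hm
    rw [qpWalks_eq_card]
    have : IsEmpty {p : DyckWord // p.toList.length = m} := by
      constructor
      rintro ⟨p, hp⟩
      rw [← p.two_mul_semilength_eq_length] at hp
      obtain ⟨k, hk⟩ := hm
      omega
    exact Nat.card_of_isEmpty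
end

section
/- For n ≥ 1, the number of closed quarter-plane walks of length 3n with step set S = {(-1,0),(0,1),(1,-1)} equals 27^{n-1}(4/3)_{n-1}(5/3)_{n-1} / ((3)_{n-1}(4)_{n-1}), and closed walks exist only for lengths divisible by 3. -/
open Finset

namespace QP7

def S0 : Set (ℤ × ℤ) := {(-1,0), (0,1), (1,-1)}

def psum (m : ℕ) (f : Fin m → ℤ × ℤ) (k : ℕ) : ℤ × ℤ :=
  ∑ i ∈ Finset.univ.filter (fun i : Fin m => (i : ℕ) < k), f i

def WP (m : ℕ) (e : ℤ × ℤ) (f : Fin m → ℤ × ℤ) : Prop :=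
  (∀ i, f i ∈ S0) ∧
  (∀ k : ℕ, 0 ≤ (psum m f k).1 ∧ 0 ≤ (psum m f k).2) ∧
  (∑ i, f i) = e

lemma qpWalks_eq (m : ℕ) (e : ℤ × ℤ) :
    qpWalks S0 m e = Nat.card {f : Fin m → ℤ × ℤ // WP m e f} := rfl

instance walkFinite (m : ℕ) (e : ℤ × ℤ) : Finite {f : Fin m → ℤ × ℤ // WP m e f} := by
  have h : S0.Finite := (Set.finite_singleton _).insert _ |>.insert _
  have : Finite ↥S0 := h.to_subtype
  apply Finite.of_injective (fun f : {f : Fin m → ℤ × ℤ // WP m e f} =>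
    (fun i => (⟨f.1 i, f.2.1 i⟩ : ↥S0)))
  intro f g hfg
  apply Subtype.ext
  funext i
  exact congrArg Subtype.val (congrFun hfg i)

lemma psum_succ (m : ℕ) (f : Fin (m+1) → ℤ × ℤ) (k : ℕ) :
    psum (m+1) f k = psum m (Fin.init f) k + (if m < k then f (Fin.last m) else 0) := by
  simp only [psum, Finset.sum_filter, Fin.sum_univ_castSucc, Fin.coe_castSucc, Fin.val_last,
    Fin.init]

lemma psum_of_le (m : ℕ) (f : Fin m → ℤ × ℤ) (k : ℕ) (h : m ≤ k) :
    psum m f k = ∑ i, f i := by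
  unfold psum
  congr 1
  apply Finset.filter_true_of_mem
  intro i _
  exact lt_of_lt_of_le i.isLt h

lemma wp_init {m : ℕ} {e : ℤ × ℤ} {f : Fin (m+1) → ℤ × ℤ} (hf : WP (m+1) e f) :
    WP m (e - f (Fin.last m)) (Fin.init f) := by
  obtain ⟨hs, hnn, htot⟩ := hf
  have hps : ∀ k, k ≤ m → psum (m+1) f k = psum m (Fin.init f) k := by
    intro k hk
    rw [psum_succ, if_neg (by omega), add_zero]
  have htot' : ∑ i, Fin.init f i = e - f (Fin.last m) := by
    have hc : ∑ i : Fin m, Fin.init f i = ∑ i : Fin m, f i.castSucc := rfl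
    rw [eq_sub_iff_add_eq, hc, ← Fin.sum_univ_castSucc]
    exact htot
  refine ⟨fun i => hs _, ?_, htot'⟩
  intro k
  rcases le_or_gt k m with hk | hk
  · rw [← hps k hk]; exact hnn k
  · have hthis := hnn m
    rw [hps m le_rfl, psum_of_le m _ m le_rfl, htot'] at hthis
    rw [psum_of_le m _ k (by omega), htot']
    exact hthis

lemma wp_snoc {m : ℕ} {e : ℤ × ℤ} {s : ℤ × ℤ} {g : Fin m → ℤ × ℤ} (hs : s ∈ S0)
    (hg : WP m (e - s) g) (h1 : 0 ≤ e.1) (h2 : 0 ≤ e.2) :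
    WP (m+1) e (Fin.snoc g s) := by
  obtain ⟨hgs, hnn, htot⟩ := hg
  have hinit : Fin.init (Fin.snoc g s : Fin (m+1) → ℤ × ℤ) = g := Fin.init_snoc _ _
  have hlast : (Fin.snoc g s : Fin (m+1) → ℤ × ℤ) (Fin.last m) = s := Fin.snoc_last _ _
  have htot' : ∑ i, (Fin.snoc g s : Fin (m+1) → ℤ × ℤ) i = e := by
    rw [Fin.sum_univ_castSucc]
    have : ∑ i : Fin m, (Fin.snoc g s : Fin (m+1) → ℤ × ℤ) i.castSucc = ∑ i, g i := by
      apply Finset.sum_congr rfl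
      intro i _
      exact Fin.snoc_castSucc _ _ _
    rw [this, hlast, htot]
    abel
  refine ⟨?_, ?_, htot'⟩
  · intro i
    refine Fin.lastCases ?_ ?_ i
    · rw [hlast]; exact hs
    · intro j; rw [Fin.snoc_castSucc]; exact hgs j
  · intro k
    rw [psum_succ, hinit, hlast]
    rcases lt_or_ge m k with h | h
    · rw [if_pos h, psum_of_le m g k (by omega), htot]
      simpa using ⟨h1, h2⟩
    · rw [if_neg (Nat.not_lt.mpr h), add_zero]
      exact hnn k


lemma qpWalks_out {m : ℕ} {e : ℤ × ℤ} (h : ¬ (0 ≤ e.1 ∧ 0 ≤ e.2)) :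
    qpWalks S0 m e = 0 := by
  rw [qpWalks_eq]
  have : IsEmpty {f : Fin m → ℤ × ℤ // WP m e f} := by
    constructor
    rintro ⟨f, hs, hnn, htot⟩
    apply h
    have := hnn m
    rwa [psum_of_le m f m le_rfl, htot] at this
  simp

lemma qpWalks_zero (e : ℤ × ℤ) :
    qpWalks S0 0 e = if e = (0, 0) then 1 else 0 := by
  rw [qpWalks_eq]
  split
  · rename_i he
    subst he
    have : Nonempty {f : Fin 0 → ℤ × ℤ // WP 0 ((0:ℤ),(0:ℤ)) f} := by
      refine ⟨⟨fun i => i.elim0, fun i => i.elim0, ?_, by simp; rfl⟩⟩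
      intro k
      have : psum 0 (fun i => i.elim0) k = 0 := by
        simp [psum]
      simp [this]
    have : Subsingleton {f : Fin 0 → ℤ × ℤ // WP 0 ((0:ℤ),(0:ℤ)) f} := by
      constructor
      rintro ⟨f, _⟩ ⟨g, _⟩
      apply Subtype.ext
      funext i
      exact i.elim0
    exact Nat.card_unique
  · rename_i he
    have : IsEmpty {f : Fin 0 → ℤ × ℤ // WP 0 e f} := by
      constructor
      rintro ⟨f, _, _, htot⟩
      exact he (by simp at htot; exact htot.symm)
    simp

def s1 : ℤ × ℤ := (-1, 0)
def s2 : ℤ × ℤ := (0, 1)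
def s3 : ℤ × ℤ := (1, -1)

lemma mem_S0 {s : ℤ × ℤ} (h : s ∈ S0) : s = s1 ∨ s = s2 ∨ s = s3 := h

noncomputable def walkEquiv (m : ℕ) (e : ℤ × ℤ) (h1 : 0 ≤ e.1) (h2 : 0 ≤ e.2) :
    {f : Fin (m+1) → ℤ × ℤ // WP (m+1) e f} ≃
      ({f : Fin m → ℤ × ℤ // WP m (e - s1) f} ⊕
        ({f : Fin m → ℤ × ℤ // WP m (e - s2) f} ⊕ {f : Fin m → ℤ × ℤ // WP m (e - s3) f})) where
  toFun f :=
    if h : f.1 (Fin.last m) = s1 then Sum.inl ⟨Fin.init f.1, by rw [← h]; exact wp_init f.2⟩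
    else if h' : f.1 (Fin.last m) = s2 then
      Sum.inr (Sum.inl ⟨Fin.init f.1, by rw [← h']; exact wp_init f.2⟩)
    else
      Sum.inr (Sum.inr ⟨Fin.init f.1, by
        have h3 : f.1 (Fin.last m) = s3 := by
          rcases mem_S0 (f.2.1 (Fin.last m)) with hh | hh | hh
          · exact absurd hh h
          · exact absurd hh h'
          · exact hh
        rw [← h3]; exact wp_init f.2⟩)
  invFun g :=
    match g with
    | Sum.inl g => ⟨Fin.snoc g.1 s1, wp_snoc (by simp [S0, s1]) g.2 h1 h2⟩
    | Sum.inr (Sum.inl g) => ⟨Fin.snoc g.1 s2, wp_snoc (by simp [S0, s2]) g.2 h1 h2⟩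
    | Sum.inr (Sum.inr g) => ⟨Fin.snoc g.1 s3, wp_snoc (by simp [S0, s3]) g.2 h1 h2⟩
  left_inv f := by
    by_cases h : f.1 (Fin.last m) = s1
    · simp only [dif_pos h]
      exact Subtype.ext (show Fin.snoc (Fin.init f.1) s1 = f.1 by
        rw [← h]; exact Fin.snoc_init_self f.1)
    · by_cases h' : f.1 (Fin.last m) = s2
      · simp only [dif_neg h, dif_pos h']
        exact Subtype.ext (show Fin.snoc (Fin.init f.1) s2 = f.1 by
          rw [← h']; exact Fin.snoc_init_self f.1)
      · simp only [dif_neg h, dif_neg h']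
        have h3 : f.1 (Fin.last m) = s3 := by
          rcases mem_S0 (f.2.1 (Fin.last m)) with hh | hh | hh
          · exact absurd hh h
          · exact absurd hh h'
          · exact hh
        exact Subtype.ext (show Fin.snoc (Fin.init f.1) s3 = f.1 by
          rw [← h3]; exact Fin.snoc_init_self f.1)
  right_inv g := by
    rcases g with g | g | g
    · have hl : (Fin.snoc g.1 s1 : Fin (m+1) → ℤ × ℤ) (Fin.last m) = s1 := Fin.snoc_last _ _
      simp only [dif_pos hl]
      refine congrArg Sum.inl (Subtype.ext ?_)
      show Fin.init (Fin.snoc g.1 s1 : Fin (m+1) → ℤ × ℤ) = g.1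
      exact Fin.init_snoc _ _
    · have hl : (Fin.snoc g.1 s2 : Fin (m+1) → ℤ × ℤ) (Fin.last m) = s2 := Fin.snoc_last _ _
      have hne : ¬ (Fin.snoc g.1 s2 : Fin (m+1) → ℤ × ℤ) (Fin.last m) = s1 := by
        rw [hl]; simp [s1, s2, Prod.ext_iff]
      simp only [dif_neg hne, dif_pos hl]
      refine congrArg (Sum.inr ∘ Sum.inl) (Subtype.ext ?_)
      show Fin.init (Fin.snoc g.1 s2 : Fin (m+1) → ℤ × ℤ) = g.1
      exact Fin.init_snoc _ _
    · have hl : (Fin.snoc g.1 s3 : Fin (m+1) → ℤ × ℤ) (Fin.last m) = s3 := Fin.snoc_last _ _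
      have hne : ¬ (Fin.snoc g.1 s3 : Fin (m+1) → ℤ × ℤ) (Fin.last m) = s1 := by
        rw [hl]; simp [s1, s3, Prod.ext_iff]
      have hne' : ¬ (Fin.snoc g.1 s3 : Fin (m+1) → ℤ × ℤ) (Fin.last m) = s2 := by
        rw [hl]; simp [s2, s3, Prod.ext_iff]
      simp only [dif_neg hne, dif_neg hne']
      refine congrArg (Sum.inr ∘ Sum.inr) (Subtype.ext ?_)
      show Fin.init (Fin.snoc g.1 s3 : Fin (m+1) → ℤ × ℤ) = g.1
      exact Fin.init_snoc _ _

lemma qpWalks_succ (m : ℕ) (e : ℤ × ℤ) (h1 : 0 ≤ e.1) (h2 : 0 ≤ e.2) :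
    qpWalks S0 (m+1) e =
      qpWalks S0 m (e.1 + 1, e.2) + qpWalks S0 m (e.1, e.2 - 1) +
        qpWalks S0 m (e.1 - 1, e.2 + 1) := by
  have he1 : e - s1 = (e.1 + 1, e.2) := by simp [s1, Prod.ext_iff]
  have he2 : e - s2 = (e.1, e.2 - 1) := by simp [s2, Prod.ext_iff]
  have he3 : e - s3 = (e.1 - 1, e.2 + 1) := by simp [s3, Prod.ext_iff]
  rw [qpWalks_eq, Nat.card_congr (walkEquiv m e h1 h2), Nat.card_sum, Nat.card_sum,
    ← qpWalks_eq, ← qpWalks_eq, ← qpWalks_eq, he1, he2, he3]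
  ring


def hookQ (a b c : ℕ) : ℚ :=
  (a+b+c).factorial * ((a:ℚ) - b + 1) * ((b:ℚ) - c + 1) * ((a:ℚ) - c + 2) /
    ((a+2).factorial * (b+1).factorial * c.factorial)

lemma fact_ne (n : ℕ) : ((n.factorial : ℚ)) ≠ 0 := Nat.cast_ne_zero.mpr n.factorial_ne_zero

lemma hookQ_vanish1 (b c : ℕ) : hookQ b (b+1) c = 0 := by
  unfold hookQ; push_cast; ring

lemma hookQ_vanish2 (a c : ℕ) : hookQ a c (c+1) = 0 := by
  unfold hookQ; push_cast; ring

lemma hookQ_rec1 (A B C : ℕ) :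
    hookQ (A+1) (B+1) (C+1) = hookQ (A+1) (B+1) C + hookQ A (B+1) (C+1) + hookQ (A+1) B (C+1) := by
  unfold hookQ
  have e0 : (A+1) + (B+1) + (C+1) = (A+B+C+2) + 1 := by ring
  have e1 : (A+1) + (B+1) + C = A+B+C+2 := by ring
  have e2 : A + (B+1) + (C+1) = A+B+C+2 := by ring
  have e3 : (A+1) + B + (C+1) = A+B+C+2 := by ring
  have e4 : A+1+2 = (A+2)+1 := by ring
  rw [e0, e1, e2, e3, e4, Nat.factorial_succ (A+B+C+2), Nat.factorial_succ (A+2),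
    Nat.factorial_succ (B+1), Nat.factorial_succ C]
  push_cast
  field_simp
  ring

lemma hookQ_rec2 (A B : ℕ) :
    hookQ (A+1) (B+1) 0 = hookQ A (B+1) 0 + hookQ (A+1) B 0 := by
  unfold hookQ
  have e0 : (A+1) + (B+1) + 0 = (A+B+1) + 1 := by ring
  have e1 : A + (B+1) + 0 = A+B+1 := by ring
  have e2 : (A+1) + B + 0 = A+B+1 := by ring
  have e4 : A+1+2 = (A+2)+1 := by ring
  rw [e0, e1, e2, e4, Nat.factorial_succ (A+B+1), Nat.factorial_succ (A+2),
    Nat.factorial_succ (B+1)]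
  push_cast
  field_simp
  ring

lemma hookQ_a00 (a : ℕ) : hookQ a 0 0 = 1 := by
  unfold hookQ
  have e0 : a + 0 + 0 = a := by ring
  have e1 : a + 2 = (a+1) + 1 := by ring
  rw [e0, e1, Nat.factorial_succ (a+1), Nat.factorial_succ a]
  push_cast
  field_simp
  ring

lemma hookQ_rec (a b c : ℕ) (hcb : c ≤ b) (hba : b ≤ a) (ha : 1 ≤ a) :
    hookQ a b c = (if 1 ≤ c then hookQ a b (c-1) else 0)
      + (if b < a then hookQ (a-1) b c else 0)
      + (if c < b then hookQ a (b-1) c else 0) := by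
  match c with
  | C+1 =>
    obtain ⟨B, rfl⟩ : ∃ B, b = B + 1 := ⟨b - 1, by omega⟩
    obtain ⟨A, rfl⟩ : ∃ A, a = A + 1 := ⟨a - 1, by omega⟩
    rw [if_pos (by omega)]
    have h2 : (if B+1 < A+1 then hookQ (A+1-1) (B+1) (C+1) else 0) = hookQ A (B+1) (C+1) := by
      by_cases h : B + 1 < A + 1
      · rw [if_pos h]; norm_num
      · rw [if_neg h]
        have hAB : A = B := by omega
        subst hAB
        exact (hookQ_vanish1 _ _).symm
    have h3 : (if C+1 < B+1 then hookQ (A+1) (B+1-1) (C+1) else 0) = hookQ (A+1) B (C+1) := by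
      by_cases h : C + 1 < B + 1
      · rw [if_pos h]; norm_num
      · rw [if_neg h]
        have hBC : B = C := by omega
        subst hBC
        exact (hookQ_vanish2 _ _).symm
    rw [h2, h3]
    have e : C + 1 - 1 = C := by omega
    rw [e]
    exact hookQ_rec1 A B C
  | 0 =>
    match b with
    | B+1 =>
      obtain ⟨A, rfl⟩ : ∃ A, a = A + 1 := ⟨a - 1, by omega⟩
      rw [if_neg (show ¬ 1 ≤ 0 by omega), if_pos (show 0 < B+1 by omega)]
      have h2 : (if B+1 < A+1 then hookQ (A+1-1) (B+1) 0 else 0) = hookQ A (B+1) 0 := by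
        by_cases h : B + 1 < A + 1
        · rw [if_pos h]; norm_num
        · rw [if_neg h]
          have hAB : A = B := by omega
          subst hAB
          exact (hookQ_vanish1 _ _).symm
      rw [h2]
      have e : B + 1 - 1 = B := by omega
      rw [e, zero_add]
      exact hookQ_rec2 A B
    | 0 =>
      obtain ⟨A, rfl⟩ : ∃ A, a = A + 1 := ⟨a - 1, by omega⟩
      rw [if_neg (show ¬ 1 ≤ 0 by omega), if_pos (show 0 < A+1 by omega),
        if_neg (show ¬ (0:ℕ) < 0 by omega)]
      have e : A + 1 - 1 = A := by omega
      rw [e, hookQ_a00, hookQ_a00]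
      norm_num


def E (m : ℕ) (x y : ℤ) : ℚ :=
  if 0 ≤ x ∧ 0 ≤ y ∧ ((m:ℤ) + x - y) % 3 = 0 ∧ x ≤ ((m:ℤ) + x - y) / 3 then
    hookQ ((((m:ℤ) + x - y) / 3) + y).toNat (((m:ℤ) + x - y) / 3).toNat
      ((((m:ℤ) + x - y) / 3) - x).toNat
  else 0

lemma E_pos (m : ℕ) (x y b : ℤ) (hx : 0 ≤ x) (hy : 0 ≤ y) (hb : (m:ℤ) + x - y = 3*b)
    (hxb : x ≤ b) : E m x y = hookQ (b+y).toNat b.toNat (b-x).toNat := by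
  have hdiv : ((m:ℤ) + x - y) / 3 = b := by omega
  have hmod : ((m:ℤ) + x - y) % 3 = 0 := by omega
  rw [E, if_pos ⟨hx, hy, hmod, by omega⟩, hdiv]

lemma E_neg (m : ℕ) (x y : ℤ)
    (h : ¬ (0 ≤ x ∧ 0 ≤ y ∧ ((m:ℤ) + x - y) % 3 = 0 ∧ x ≤ ((m:ℤ) + x - y) / 3)) :
    E m x y = 0 := if_neg h

lemma E_succ (m : ℕ) (x y : ℤ) (hx : 0 ≤ x) (hy : 0 ≤ y) :
    E (m+1) x y = E m (x+1) y + E m x (y-1) + E m (x-1) (y+1) := by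
  by_cases hd : (((m+1:ℕ):ℤ) + x - y) % 3 = 0
  · obtain ⟨b, hb⟩ : ∃ b : ℤ, (((m+1:ℕ):ℤ) + x - y) = 3*b := ⟨_, (Int.mul_ediv_add_emod _ 3).symm.trans (by rw [hd]; ring)⟩
    by_cases hxb : x ≤ b
    · have hb1 : ((m:ℤ) + (x+1) - y) = 3*b := by push_cast at hb ⊢; omega
      have hb2 : ((m:ℤ) + x - (y-1)) = 3*b := by push_cast at hb ⊢; omega
      have hb3 : ((m:ℤ) + (x-1) - (y+1)) = 3*(b-1) := by push_cast at hb ⊢; omega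
      rw [E_pos (m+1) x y b hx hy hb hxb]
      have hc1 : E m (x+1) y =
          if 1 ≤ (b-x).toNat then hookQ (b+y).toNat b.toNat ((b-x).toNat - 1) else 0 := by
        by_cases h : x + 1 ≤ b
        · rw [if_pos (by omega), E_pos m (x+1) y b (by omega) hy hb1 h,
            show (b-(x+1)).toNat = (b-x).toNat - 1 by omega]
        · rw [if_neg (by omega), E_neg]
          rintro ⟨-, -, -, h4⟩
          omega
      have hc2 : E m x (y-1) =
          if b.toNat < (b+y).toNat then hookQ ((b+y).toNat - 1) b.toNat (b-x).toNat else 0 := by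
        by_cases h : 1 ≤ y
        · rw [if_pos (by omega), E_pos m x (y-1) b hx (by omega) hb2 hxb,
            show (b+(y-1)).toNat = (b+y).toNat - 1 by omega]
        · rw [if_neg (by omega), E_neg]
          rintro ⟨-, h2', -, -⟩
          omega
      have hc3 : E m (x-1) (y+1) =
          if (b-x).toNat < b.toNat then hookQ (b+y).toNat (b.toNat - 1) (b-x).toNat else 0 := by
        by_cases h : 1 ≤ x
        · rw [if_pos (by omega), E_pos m (x-1) (y+1) (b-1) (by omega) (by omega) hb3 (by omega),
            show (b-1+(y+1)).toNat = (b+y).toNat by omega,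
            show ((b-1) : ℤ).toNat = b.toNat - 1 by omega,
            show (b-1-(x-1)).toNat = (b-x).toNat by omega]
        · rw [if_neg (by omega), E_neg]
          rintro ⟨h1', -, -, -⟩
          omega
      rw [hc1, hc2, hc3]
      exact hookQ_rec (b+y).toNat b.toNat (b-x).toNat (by omega) (by omega) (by omega)
    · rw [E_neg (m+1) x y (by rintro ⟨-, -, -, h4⟩; omega),
        E_neg m (x+1) y (by rintro ⟨-, -, -, h4⟩; omega),
        E_neg m x (y-1) (by rintro ⟨-, -, h3', h4⟩; omega),
        E_neg m (x-1) (y+1) (by rintro ⟨-, -, h3', h4⟩; omega)]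
      norm_num
  · rw [E_neg (m+1) x y (by rintro ⟨-, -, h3', -⟩; omega),
      E_neg m (x+1) y (by rintro ⟨-, -, h3', -⟩; omega),
      E_neg m x (y-1) (by rintro ⟨-, -, h3', -⟩; omega),
      E_neg m (x-1) (y+1) (by rintro ⟨-, -, h3', -⟩; omega)]
    norm_num

lemma main (m : ℕ) : ∀ x y : ℤ, (qpWalks S0 m (x, y) : ℚ) = E m x y := by
  induction m with
  | zero =>
    intro x y
    rw [qpWalks_zero]
    by_cases h : ((x, y) : ℤ × ℤ) = (0, 0)
    · obtain ⟨hx, hy⟩ : x = 0 ∧ y = 0 := by simpa [Prod.ext_iff] using h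
      subst hx; subst hy
      rw [if_pos rfl, E_pos 0 0 0 0 le_rfl le_rfl (by norm_num) le_rfl]
      norm_num [hookQ, Nat.factorial]
    · rw [if_neg h, E_neg]
      · norm_num
      · rintro ⟨h1, h2, h3, h4⟩
        apply h
        have hxy : x = 0 ∧ y = 0 := by omega
        simp [Prod.ext_iff, hxy.1, hxy.2]
  | succ m ih =>
    intro x y
    by_cases hq : 0 ≤ x ∧ 0 ≤ y
    · rw [qpWalks_succ m (x, y) hq.1 hq.2, E_succ m x y hq.1 hq.2]
      push_cast
      rw [ih, ih, ih]
    · rw [qpWalks_out (by simpa using hq), E_neg]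
      · norm_num
      · rintro ⟨h1, h2, -⟩
        exact hq ⟨h1, h2⟩


lemma E_diag (n : ℕ) : E (3*n) 0 0 = hookQ n n n := by
  rw [E_pos (3*n) 0 0 (n:ℤ) le_rfl le_rfl (by push_cast; ring) (by positivity),
    show ((n:ℤ) + 0).toNat = n by omega, show ((n:ℤ)).toNat = n by omega,
    show ((n:ℤ) - 0).toNat = n by omega]

lemma hookQ_ratio (k : ℕ) :
    hookQ (k+2) (k+2) (k+2) = hookQ (k+1) (k+1) (k+1) *
      ((3*(k:ℚ)+4) * (3*(k:ℚ)+5) * (3*(k:ℚ)+6)) / (((k:ℚ)+2) * ((k:ℚ)+3) * ((k:ℚ)+4)) := by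
  unfold hookQ
  have e0 : (k+2) + (k+2) + (k+2) = (3*k+5) + 1 := by ring
  have e1 : (3*k+5) = (3*k+4) + 1 := by ring
  have e2 : (3*k+4) = (3*k+3) + 1 := by ring
  have e3 : (k+1) + (k+1) + (k+1) = 3*k+3 := by ring
  have e4 : (k+2) + 2 = (k+3) + 1 := by ring
  have e5 : (k+2) + 1 = (k+2) + 1 := rfl
  have e6 : (k+1) + 2 = (k+2) + 1 := by ring
  have e7 : (k+1) + 1 = (k+1) + 1 := rfl
  rw [e0, Nat.factorial_succ (3*k+5), e1, Nat.factorial_succ (3*k+4), e2,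
    Nat.factorial_succ (3*k+3), e3, e4, Nat.factorial_succ (k+3), e6,
    Nat.factorial_succ (k+2), Nat.factorial_succ (k+1)]
  have h1 : ((3*k+3).factorial : ℚ) ≠ 0 := fact_ne _
  have h2 : (((k+1)).factorial : ℚ) ≠ 0 := fact_ne _
  have h3 : (((k+2)).factorial : ℚ) ≠ 0 := fact_ne _
  push_cast
  field_simp
  ring

lemma hookQ_closed (k : ℕ) :
    hookQ (k+1) (k+1) (k+1) =
      27 ^ k * (ascPochhammer ℚ k).eval (4/3) * (ascPochhammer ℚ k).eval (5/3) /
        ((ascPochhammer ℚ k).eval 3 * (ascPochhammer ℚ k).eval 4) := by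
  induction k with
  | zero =>
    norm_num [hookQ, Nat.factorial]
  | succ k ih =>
    have hr := hookQ_ratio k
    rw [show k + 1 + 1 = k + 2 from rfl] at *
    rw [hr, ih]
    rw [ascPochhammer_succ_eval, ascPochhammer_succ_eval, ascPochhammer_succ_eval,
      ascPochhammer_succ_eval]
    have p3 : (0:ℚ) < (ascPochhammer ℚ k).eval 3 := ascPochhammer_pos k 3 (by norm_num)
    have p4 : (0:ℚ) < (ascPochhammer ℚ k).eval 4 := ascPochhammer_pos k 4 (by norm_num)
    have h3 : (ascPochhammer ℚ k).eval 3 ≠ 0 := ne_of_gt p3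
    have h4 : (ascPochhammer ℚ k).eval 4 ≠ 0 := ne_of_gt p4
    have hk2 : ((k:ℚ)+2) ≠ 0 := by positivity
    have hk3 : ((k:ℚ)+3) ≠ 0 := by positivity
    have hk4 : ((k:ℚ)+4) ≠ 0 := by positivity
    have hk3' : ((3:ℚ)+k) ≠ 0 := by positivity
    have hk4' : ((4:ℚ)+k) ≠ 0 := by positivity
    field_simp
    ring

end QP7

theorem closed_walks_step_set_7 :
    (∀ n : ℕ, 1 ≤ n →
      (qpWalks {(-1,0), (0,1), (1,-1)} (3 * n) (0, 0) : ℚ) =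
        27 ^ (n - 1) * (ascPochhammer ℚ (n - 1)).eval (4/3) *
            (ascPochhammer ℚ (n - 1)).eval (5/3) /
          ((ascPochhammer ℚ (n - 1)).eval 3 * (ascPochhammer ℚ (n - 1)).eval 4)) ∧
    (∀ m : ℕ, ¬ (3 ∣ m) → qpWalks {(-1,0), (0,1), (1,-1)} m (0, 0) = 0) := by
  constructor
  · intro n hn
    obtain ⟨k, rfl⟩ : ∃ k, n = k + 1 := ⟨n - 1, by omega⟩
    have hmain := QP7.main (3*(k+1)) 0 0
    have : qpWalks {(-1,0), (0,1), (1,-1)} (3*(k+1)) ((0:ℤ), (0:ℤ)) =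
        qpWalks QP7.S0 (3*(k+1)) ((0:ℤ), (0:ℤ)) := rfl
    rw [this, hmain, QP7.E_diag, QP7.hookQ_closed,
      show k + 1 - 1 = k from rfl]
  · intro m hm
    have hmain := QP7.main m 0 0
    rw [QP7.E_neg m 0 0 (by rintro ⟨-, -, h3, -⟩; exact hm (by omega))] at hmain
    have : qpWalks {(-1,0), (0,1), (1,-1)} m ((0:ℤ), (0:ℤ)) =
        qpWalks QP7.S0 m ((0:ℤ), (0:ℤ)) := rfl
    rw [this]
    exact_mod_cast hmain
end

section
/- For n ≥ 1, the number of closed quarter-plane walks of length 4n with step set S = {(0,1),(-1,-1),(1,-1)} equals 2·64^{n-1}(5/4)_{n-1}(3/2)_{n-1}(7/4)_{n-1} / ((2)_{n-1}(5/2)_{n-1}(3)_{n-1}), and closed walks exist only for lengths divisible by 4. -/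
open Finset

namespace QPW
open List DyckStep

def Sset : Set (ℤ × ℤ) := {(0,1), (-1,-1), (1,-1)}

def stepV (s : ℤ × ℤ) : DyckStep := if s.2 = 1 then U else D
def stepH (s : ℤ × ℤ) : DyckStep := if s.1 = 1 then U else D
def isDown (s : ℤ × ℤ) : Bool := decide (s.2 ≠ 1)

def vW (l : List (ℤ × ℤ)) : List DyckStep := l.map stepV
def hW (l : List (ℤ × ℤ)) : List DyckStep := (l.filter isDown).map stepH

def combine : List DyckStep → List DyckStep → List (ℤ × ℤ)
  | [], _ => []
  | U :: v, h => (0, 1) :: combine v h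
  | D :: v, h => ((if h.headI = U then 1 else -1), -1) :: combine v h.tail

lemma mem_combine (v h : List DyckStep) : ∀ s ∈ combine v h, s ∈ Sset := by
  induction v generalizing h with
  | nil => simp [combine]
  | cons x v ih =>
    cases x <;> intro s hs <;> rw [combine] at hs <;> rcases mem_cons.mp hs with rfl | h1
    · simp [Sset]
    · exact ih _ s h1
    · by_cases hh : h.headI = U <;> simp [hh, Sset]
    · exact ih _ s h1

lemma length_combine (v h : List DyckStep) : (combine v h).length = v.length := by
  induction v generalizing h with
  | nil => rfl
  | cons x v ih => cases x <;> simp [combine, ih]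

lemma vW_combine (v h : List DyckStep) : vW (combine v h) = v := by
  induction v generalizing h with
  | nil => rfl
  | cons x v ih =>
    cases x
    · by_cases hh : h.headI = U <;> simp [combine, hh, vW, stepV] at ih ⊢ <;> exact ih _
    · simp [combine, vW, stepV] at ih ⊢; exact ih _

lemma hW_combine (v : List DyckStep) : ∀ h : List DyckStep, h.length = v.count D →
    hW (combine v h) = h := by
  induction v with
  | nil => intro h hh; simp at hh; simp [combine, hW, hh]
  | cons x v ih =>
    intro h hh
    cases x
    · simp [count_cons] at hh
      simp [combine, hW, isDown] at ih ⊢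
      exact ih h hh
    · simp [count_cons] at hh
      match h with
      | [] => simp at hh
      | y :: h =>
        simp at hh
        have := ih h hh
        cases y <;> simp [combine, hW, isDown, stepH] at this ⊢ <;> exact this

lemma combine_vW_hW (l : List (ℤ × ℤ)) (hl : ∀ s ∈ l, s ∈ Sset) :
    combine (vW l) (hW l) = l := by
  induction l with
  | nil => rfl
  | cons s l ih =>
    have hs := hl s (by simp)
    have ht : ∀ s ∈ l, s ∈ Sset := fun x hx => hl x (by simp [hx])
    rcases hs with h1 | h1 | h1 <;> subst h1 <;>
      simp [vW, hW, stepV, stepH, isDown, combine] <;> exact ih ht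

def Z (w : List DyckStep) : ℤ := (w.count U : ℤ) - w.count D

lemma count_U_add_count_D (w : List DyckStep) : w.count U + w.count D = w.length := by
  induction w with
  | nil => rfl
  | cons x w ih => cases x <;> simp [count_cons] at ih ⊢ <;> omega

lemma sum_eq (l : List (ℤ × ℤ)) (hl : ∀ s ∈ l, s ∈ Sset) :
    l.sum = (Z (hW l), Z (vW l)) := by
  induction l with
  | nil => simp [hW, vW, Z]; rfl
  | cons s l ih =>
    have ht : ∀ s ∈ l, s ∈ Sset := fun x hx => hl x (by simp [hx])
    have := ih ht
    rcases hl s (by simp) with h1 | h1 | h1 <;> subst h1 <;>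
      simp [vW, hW, stepV, stepH, isDown, Z, count_cons, this, Prod.ext_iff] <;>
      first
        | (push_cast; ring1)
        | (constructor <;> push_cast <;> ring)
        | exact ⟨trivial, trivial⟩

lemma filter_take (p : (ℤ × ℤ) → Bool) (l : List (ℤ × ℤ)) :
    ∀ k, (l.take k).filter p = (l.filter p).take ((l.take k).countP p) := by
  induction l with
  | nil => simp
  | cons s l ih =>
    intro k
    cases k with
    | zero => simp
    | succ k =>
      by_cases hp : p s <;> simp [hp, countP_cons, ih k]

lemma hW_take (l : List (ℤ × ℤ)) (k : ℕ) :
    hW (l.take k) = (hW l).take ((l.take k).countP isDown) := by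
  simp [hW, filter_take, map_take]

lemma vW_take (l : List (ℤ × ℤ)) (k : ℕ) : vW (l.take k) = (vW l).take k := by
  simp [vW, map_take]

lemma countP_take_exists (p : (ℤ × ℤ) → Bool) (l : List (ℤ × ℤ)) :
    ∀ j ≤ l.countP p, ∃ k, (l.take k).countP p = j := by
  induction l with
  | nil => intro j hj; simp at hj; exact ⟨0, by simp [hj]⟩
  | cons s l ih =>
    intro j hj
    cases j with
    | zero => exact ⟨0, by simp⟩
    | succ j =>
      by_cases hp : p s
      · simp [countP_cons, hp] at hj
        obtain ⟨k, hk⟩ := ih j (by omega)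
        exact ⟨k + 1, by simp [countP_cons, hp, hk]⟩
      · simp [countP_cons, hp] at hj
        obtain ⟨k, hk⟩ := ih (j+1) hj
        exact ⟨k + 1, by simp [countP_cons, hp, hk]⟩

lemma Z_nonneg {w : List DyckStep} : 0 ≤ Z w ↔ w.count D ≤ w.count U := by
  unfold Z; omega

lemma Z_eq_zero {w : List DyckStep} : Z w = 0 ↔ w.count U = w.count D := by
  unfold Z; omega

lemma countD_vW (l : List (ℤ × ℤ)) : (vW l).count D = l.countP isDown := by
  induction l with
  | nil => rfl
  | cons s l ih =>
    by_cases h : s.2 = 1 <;>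
      simp [vW, stepV, isDown, h, count_cons, countP_cons] at ih ⊢ <;> omega

lemma length_hW (l : List (ℤ × ℤ)) : (hW l).length = l.countP isDown := by
  simp [hW, (List.countP_eq_length_filter (p := isDown) (l := l)).symm]

/-- The walk condition on lists. -/
def WCond (m : ℕ) (l : List (ℤ × ℤ)) : Prop :=
  l.length = m ∧ (∀ s ∈ l, s ∈ Sset) ∧
    (∀ k : ℕ, 0 ≤ (l.take k).sum.1 ∧ 0 ≤ (l.take k).sum.2) ∧ l.sum = 0

variable {m n : ℕ} {l : List (ℤ × ℤ)}

lemma take_mem (hl : ∀ s ∈ l, s ∈ Sset) (k : ℕ) : ∀ s ∈ l.take k, s ∈ Sset :=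
  fun s hs => hl s (mem_of_mem_take hs)

/-- vertical Dyck word of a walk -/
def vword (h : WCond m l) : DyckWord where
  toList := vW l
  count_U_eq_count_D := by
    have := sum_eq l h.2.1
    rw [h.2.2.2] at this
    exact Z_eq_zero.mp (congrArg Prod.snd this).symm
  count_D_le_count_U i := by
    have h2 := (h.2.2.1 i).2
    rw [sum_eq _ (take_mem h.2.1 i), vW_take] at h2
    exact Z_nonneg.mp h2

/-- horizontal Dyck word of a walk -/
def hword (h : WCond m l) : DyckWord where
  toList := hW l
  count_U_eq_count_D := by
    have := sum_eq l h.2.1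
    rw [h.2.2.2] at this
    exact Z_eq_zero.mp (congrArg Prod.fst this).symm
  count_D_le_count_U i := by
    by_cases hi : i ≤ (hW l).length
    · rw [length_hW] at hi
      obtain ⟨k, hk⟩ := countP_take_exists isDown l i hi
      have h2 := (h.2.2.1 k).1
      rw [sum_eq _ (take_mem h.2.1 k), hW_take, hk] at h2
      exact Z_nonneg.mp h2
    · rw [take_of_length_le (by omega)]
      have := sum_eq l h.2.1
      rw [h.2.2.2] at this
      exact le_of_eq (Z_eq_zero.mp (congrArg Prod.fst this).symm).symm

lemma vword_toList {m : ℕ} {l : List (ℤ × ℤ)} (h : WCond m l) : (vword h).toList = vW l := rfl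

lemma hword_toList {m : ℕ} {l : List (ℤ × ℤ)} (h : WCond m l) : (hword h).toList = hW l := rfl

lemma vword_semilength (h : WCond (4 * n) l) : (vword h).semilength = 2 * n := by
  have h1 : (vword h).toList = vW l := rfl
  have h2 := (vword h).count_U_eq_count_D
  have h3 := count_U_add_count_D (vW l)
  have h4 : (vW l).length = 4 * n := by simp [vW, h.1]
  rw [h1] at h2
  unfold DyckWord.semilength
  rw [h1]; omega

lemma countP_isDown (h : WCond (4 * n) l) : l.countP isDown = 2 * n := by
  have h2 := (vword h).count_U_eq_count_D
  have h3 := count_U_add_count_D (vW l)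
  have h4 : (vW l).length = 4 * n := by simp [vW, h.1]
  have h5 := countD_vW l
  have h1 : (vword h).toList = vW l := rfl
  rw [h1] at h2
  omega

lemma hword_semilength (h : WCond (4 * n) l) : (hword h).semilength = n := by
  have h2 := (hword h).count_U_eq_count_D
  have h3 := count_U_add_count_D (hW l)
  have h4 : (hW l).length = 2 * n := by rw [length_hW, countP_isDown h]
  have h1 : (hword h).toList = hW l := rfl
  rw [h1] at h2
  unfold DyckWord.semilength
  rw [h1]; omega

/-- the reverse construction -/
lemma combine_cond (v w : DyckWord) (hv : v.semilength = 2 * n) (hw : w.semilength = n) :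
    WCond (4 * n) (combine v.toList w.toList) := by
  have lenh : w.toList.length = v.toList.count D := by
    have := w.two_mul_semilength_eq_length
    have := v.semilength_eq_count_D
    omega
  have hvw : vW (combine v.toList w.toList) = v.toList := vW_combine _ _
  have hhw : hW (combine v.toList w.toList) = w.toList := hW_combine _ _ lenh
  have hmem := mem_combine v.toList w.toList
  refine ⟨?_, hmem, fun k => ?_, ?_⟩
  · rw [length_combine]
    have := v.two_mul_semilength_eq_length
    omega
  · rw [sum_eq _ (take_mem hmem k), hW_take, vW_take, hvw, hhw]
    exact ⟨Z_nonneg.mpr (w.count_D_le_count_U _), Z_nonneg.mpr (v.count_D_le_count_U _)⟩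
  · rw [sum_eq _ hmem, hvw, hhw]
    simp [Prod.ext_iff, Z_eq_zero.mpr w.count_U_eq_count_D, Z_eq_zero.mpr v.count_U_eq_count_D]

variable {m n : ℕ}

def ofList (l : List (ℤ × ℤ)) (m : ℕ) (h : l.length = m) : Fin m → ℤ × ℤ :=
  fun i => l.get (Fin.cast h.symm i)

lemma ofFn_ofList (l : List (ℤ × ℤ)) (m : ℕ) (h : l.length = m) :
    List.ofFn (ofList l m h) = l := by
  subst h
  apply List.ext_get (by simp)
  intro i h1 h2
  simp [ofList, List.get_ofFn]

lemma ofList_eq (l : List (ℤ × ℤ)) (h : l.length = m) (f : Fin m → ℤ × ℤ)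
    (hl : l = List.ofFn f) : ofList l m h = f := by
  subst hl
  funext i
  simp [ofList, List.get_ofFn]

lemma sum_filter_lt (f : Fin m → ℤ × ℤ) (k : ℕ) :
    ∑ i ∈ Finset.univ.filter (fun i : Fin m => (i : ℕ) < k), f i = ((List.ofFn f).take k).sum := by
  induction k with
  | zero => simp
  | succ k ih =>
    by_cases hk : k < m
    · have hins : Finset.univ.filter (fun i : Fin m => (i : ℕ) < k + 1) =
          insert ⟨k, hk⟩ (Finset.univ.filter (fun i : Fin m => (i : ℕ) < k)) := by
        ext i; simp [Fin.ext_iff]; omega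
      rw [hins, Finset.sum_insert (by simp), ih,
        List.sum_take_succ _ k (by simp [hk])]
      simp [add_comm]; exact add_comm _ _
    · have h1 : Finset.univ.filter (fun i : Fin m => (i : ℕ) < k + 1) =
          Finset.univ.filter (fun i : Fin m => (i : ℕ) < k) := by
        ext i; simp; omega
      rw [h1, ih, take_of_length_le (by simp; omega), take_of_length_le (by simp; omega)]

lemma FCond_iff (f : Fin m → ℤ × ℤ) :
    ((∀ i, f i ∈ Sset) ∧
      (∀ k : ℕ,
        0 ≤ (∑ i ∈ Finset.univ.filter (fun i : Fin m => (i : ℕ) < k), f i).1 ∧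
        0 ≤ (∑ i ∈ Finset.univ.filter (fun i : Fin m => (i : ℕ) < k), f i).2) ∧
      (∑ i, f i) = (0, 0)) ↔ WCond m (List.ofFn f) := by
  unfold WCond
  rw [← List.sum_ofFn]
  constructor
  · rintro ⟨h1, h2, h3⟩
    refine ⟨by simp, ?_, fun k => ?_, h3⟩
    · intro s hs
      obtain ⟨i, rfl⟩ := List.mem_ofFn.mp hs
      exact h1 i
    · have := h2 k
      rwa [sum_filter_lt] at this
  · rintro ⟨h1, h2, h3, h4⟩
    refine ⟨fun i => h2 (f i) (List.mem_ofFn.mpr ⟨i, rfl⟩), fun k => ?_, h4⟩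
    rw [sum_filter_lt]
    exact h3 k

noncomputable def walkEquiv (n : ℕ) :
    {f : Fin (4 * n) → ℤ × ℤ //
      (∀ i, f i ∈ Sset) ∧
      (∀ k : ℕ,
        0 ≤ (∑ i ∈ Finset.univ.filter (fun i : Fin (4 * n) => (i : ℕ) < k), f i).1 ∧
        0 ≤ (∑ i ∈ Finset.univ.filter (fun i : Fin (4 * n) => (i : ℕ) < k), f i).2) ∧
      (∑ i, f i) = (0, 0)} ≃
    ({p : DyckWord // p.semilength = 2 * n} × {p : DyckWord // p.semilength = n}) where
  toFun x :=
    have h := (FCond_iff x.1).mp x.2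
    (⟨vword h, vword_semilength h⟩, ⟨hword h, hword_semilength h⟩)
  invFun y :=
    ⟨ofList (combine y.1.1.toList y.2.1.toList) (4 * n)
        (combine_cond y.1.1 y.2.1 y.1.2 y.2.2).1,
      (FCond_iff _).mpr (by
        rw [ofFn_ofList]
        exact combine_cond y.1.1 y.2.1 y.1.2 y.2.2)⟩
  left_inv x := by
    apply Subtype.ext
    have h := (FCond_iff x.1).mp x.2
    have hc : combine (vword h).toList (hword h).toList = List.ofFn x.1 := by
      rw [vword_toList, hword_toList]
      exact combine_vW_hW _ h.2.1
    apply ofList_eq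
    · show (combine (vword h).toList (hword h).toList).length = 4 * n
      rw [hc]
      simp
    · exact hc
  right_inv y := by
    obtain ⟨⟨v, hv⟩, ⟨w, hw⟩⟩ := y
    have lenh : w.toList.length = v.toList.count D := by
      have := w.two_mul_semilength_eq_length
      have := v.semilength_eq_count_D
      omega
    refine Prod.ext ?_ ?_ <;> apply Subtype.ext <;> apply DyckWord.ext
    · rw [vword_toList, ofFn_ofList]
      exact vW_combine _ _
    · rw [hword_toList, ofFn_ofList]
      exact hW_combine _ _ lenh
lemma count_walks (n : ℕ) :
    qpWalks Sset (4 * n) (0, 0) = catalan (2 * n) * catalan n := by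
  rw [qpWalks, Nat.card_congr (walkEquiv n), Nat.card_prod, Nat.card_eq_fintype_card,
    Nat.card_eq_fintype_card, DyckWord.card_dyckWord_semilength_eq_catalan,
    DyckWord.card_dyckWord_semilength_eq_catalan]

lemma not_dvd_empty (m : ℕ) (hm : ¬ (4 ∣ m)) : qpWalks Sset m (0, 0) = 0 := by
  rw [qpWalks, Nat.card_eq_zero]
  left
  constructor
  rintro ⟨f, h1, -, h3⟩
  apply hm
  rw [← ZMod.natCast_eq_zero_iff]
  have e1 : (m : ZMod 4) = ∑ _i : Fin m, (1 : ZMod 4) := by simp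
  have e2 : ∀ i : Fin m, (1 : ZMod 4) = ((2 * (f i).1 + (f i).2 : ℤ) : ZMod 4) := by
    intro i
    rcases h1 i with h | h | h <;> rw [h] <;> decide
  rw [e1, Finset.sum_congr rfl (fun i _ => e2 i)]
  have e3 : (∑ i : Fin m, (2 * (f i).1 + (f i).2)) = 2 * (∑ i, f i).1 + (∑ i, f i).2 := by
    rw [Prod.fst_sum, Prod.snd_sum, Finset.sum_add_distrib, Finset.mul_sum]
  rw [← Int.cast_sum, e3, h3]
  simp

-- rational identity
lemma catalan_ratio (m : ℕ) : (m + 2) * catalan (m + 1) = 2 * (2 * m + 1) * catalan m := by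
  have h1 := succ_mul_catalan_eq_centralBinom m
  have h2 := succ_mul_catalan_eq_centralBinom (m + 1)
  have h3 := Nat.succ_mul_centralBinom_succ m
  apply Nat.eq_of_mul_eq_mul_left (show 0 < m + 1 by omega)
  calc (m + 1) * ((m + 2) * catalan (m + 1)) = (m + 1) * Nat.centralBinom (m + 1) := by
        rw [← h2]
    _ = 2 * (2 * m + 1) * Nat.centralBinom m := h3
    _ = 2 * (2 * m + 1) * ((m + 1) * catalan m) := by rw [h1]
    _ = (m + 1) * (2 * (2 * m + 1) * catalan m) := by ring

lemma catalan_ratio_q (a b : ℕ) (h : b = a + 1) :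
    ((a : ℚ) + 2) * catalan b = 2 * (2 * a + 1) * catalan a := by
  subst h
  exact_mod_cast catalan_ratio a

lemma poch_pos (k : ℕ) (x : ℚ) (hx : 0 < x) : 0 < (ascPochhammer ℚ k).eval x := by
  induction k with
  | zero => simp
  | succ k ih =>
    rw [ascPochhammer_succ_eval]
    have : (0:ℚ) < x + k := by positivity
    positivity

lemma key (k : ℕ) :
    ((catalan (2 * k + 2) : ℚ) * catalan (k + 1)) *
      ((ascPochhammer ℚ k).eval 2 * (ascPochhammer ℚ k).eval (5/2) *
        (ascPochhammer ℚ k).eval 3) =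
    2 * 64 ^ k * (ascPochhammer ℚ k).eval (5/4) * (ascPochhammer ℚ k).eval (3/2) *
      (ascPochhammer ℚ k).eval (7/4) := by
  induction k with
  | zero => norm_num [catalan_two, catalan_one]
  | succ k ih =>
    have hA := catalan_ratio_q (2 * k + 2) (2 * k + 3) (by omega)
    have hB := catalan_ratio_q (2 * k + 3) (2 * k + 4) (by omega)
    have hC := catalan_ratio_q (k + 1) (k + 2) (by omega)
    push_cast at hA hB hC
    have hD : ((2*(k:ℚ)+5)*(2*k+4)) * catalan (2 * k + 4) =
        (4*(4*k+5)*(4*k+7)) * catalan (2 * k + 2) := by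
      linear_combination (2*(k:ℚ)+4) * hB + 2*(4*(k:ℚ)+7) * hA
    have hne : ((2*(k:ℚ)+5)*(2*k+4)*(k+3)) ≠ 0 := by positivity
    rw [show 2 * (k+1) + 2 = 2 * k + 4 from by ring, show k + 1 + 1 = k + 2 from rfl]
    simp only [ascPochhammer_succ_eval]
    apply mul_left_cancel₀ hne
    linear_combination
      ((catalan (k+2) : ℚ) * (k+3) * ((ascPochhammer ℚ k).eval 2 * (2+k)) *
        ((ascPochhammer ℚ k).eval (5/2) * (5/2+k)) * ((ascPochhammer ℚ k).eval 3 * (3+k))) * hD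
      + (4*(4*(k:ℚ)+5)*(4*k+7) * catalan (2*k+2) * ((ascPochhammer ℚ k).eval 2 * (2+k)) *
        ((ascPochhammer ℚ k).eval (5/2) * (5/2+k)) * ((ascPochhammer ℚ k).eval 3 * (3+k))) * hC
      + (8*(4*(k:ℚ)+5)*(4*k+7)*(2*k+3)*(2+k)*(5/2+k)*(3+k)) * ih

end QPW

theorem closed_walks_step_set_8 :
    (∀ n : ℕ, 1 ≤ n →
      (qpWalks {(0,1), (-1,-1), (1,-1)} (4 * n) (0, 0) : ℚ) =
        2 * 64 ^ (n - 1) * (ascPochhammer ℚ (n - 1)).eval (5/4) *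
            (ascPochhammer ℚ (n - 1)).eval (3/2) * (ascPochhammer ℚ (n - 1)).eval (7/4) /
          ((ascPochhammer ℚ (n - 1)).eval 2 * (ascPochhammer ℚ (n - 1)).eval (5/2) *
            (ascPochhammer ℚ (n - 1)).eval 3)) ∧
    (∀ m : ℕ, ¬ (4 ∣ m) → qpWalks {(0,1), (-1,-1), (1,-1)} m (0, 0) = 0) := by
  constructor
  · intro n hn
    obtain ⟨k, rfl⟩ : ∃ k, n = k + 1 := ⟨n - 1, by omega⟩
    have hq : qpWalks {(0,1), (-1,-1), (1,-1)} (4 * (k + 1)) (0, 0) =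
        catalan (2 * k + 2) * catalan (k + 1) := by
      have h := QPW.count_walks (k + 1)
      rw [show 2 * (k + 1) = 2 * k + 2 from by ring] at h
      exact h
    have hd1 := QPW.poch_pos k 2 (by norm_num)
    have hd2 := QPW.poch_pos k (5/2) (by norm_num)
    have hd3 := QPW.poch_pos k 3 (by norm_num)
    rw [show k + 1 - 1 = k from rfl, hq, eq_div_iff (by positivity)]
    push_cast
    linear_combination QPW.key k
  · intro m hm
    exact QPW.not_dvd_empty m hm
end

section
/- The number of closed quarter-plane walks of length 2n with step set S = {(0,1),(1,1),(-1,-1)} equals the number of Dyck-type one-dimensional walks: it equals the Catalan number Cat(n) = C(2n,n)/(n+1), the same as the number of closed quarter-plane walks of length 2n with step set {(0,1),(0,-1),(1,-1)}. -/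
open Finset

open DyckStep

/-- prefix sum of the first `k` values -/
def psum {m : ℕ} (g : Fin m → ℤ) (k : ℕ) : ℤ :=
  ∑ i ∈ Finset.univ.filter (fun i : Fin m => (i : ℕ) < k), g i

lemma psum_zero {m : ℕ} (g : Fin m → ℤ) : psum g 0 = 0 := by
  simp [psum]

lemma psum_succ {m : ℕ} (g : Fin m → ℤ) (k : ℕ) :
    psum g (k + 1) = psum g k + (if h : k < m then g ⟨k, h⟩ else 0) := by
  unfold psum
  rw [Finset.sum_filter, Finset.sum_filter]
  split
  · rename_i h
    have key : ∀ i : Fin m, (if (i : ℕ) < k + 1 then g i else 0)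
        = (if (i : ℕ) < k then g i else 0) + (if i = ⟨k, h⟩ then g i else 0) := by
      intro i
      split_ifs <;> simp_all [Fin.ext_iff] <;> omega
    rw [Finset.sum_congr rfl fun i _ => key i, Finset.sum_add_distrib,
      Finset.sum_ite_eq' Finset.univ (⟨k, h⟩ : Fin m) g]
    simp
  · rename_i h
    rw [add_zero]
    refine Finset.sum_congr rfl fun i _ => ?_
    have := i.isLt
    split_ifs <;> first | rfl | omega

lemma psum_top {m : ℕ} (g : Fin m → ℤ) (k : ℕ) (hk : m ≤ k) :
    psum g k = ∑ i, g i := by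
  unfold psum
  rw [Finset.filter_true_of_mem]
  intro i _
  exact lt_of_lt_of_le i.isLt hk

lemma bridge (l : List DyckStep) {m : ℕ} (hm : l.length = m) (g : Fin m → ℤ)
    (hg : ∀ i : Fin m, g i = if l.get (Fin.cast hm.symm i) = U then 1 else -1) :
    ∀ k, psum g k = ((l.take k).count U : ℤ) - ((l.take k).count D : ℤ) := by
  intro k
  induction k with
  | zero => simp [psum_zero]
  | succ k ih =>
    rw [psum_succ, ih, List.take_succ]
    by_cases h : k < m
    · have hl : k < l.length := by omega
      rw [List.getElem?_eq_getElem hl, dif_pos h, hg ⟨k, h⟩]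
      have : l.get (Fin.cast hm.symm ⟨k, h⟩) = l[k] := rfl
      rw [this]
      simp only [Option.toList_some, List.count_append, List.count_singleton']
      rcases (l[k]).dichotomy with hU | hU <;> rw [hU] <;> simp <;> push_cast <;> ring
    · have hl : ¬ k < l.length := by omega
      rw [List.getElem?_eq_none (by omega), dif_neg h]
      simp

def dW {n : ℕ} (g : Fin (2*n) → ℤ) : List DyckStep :=
  List.ofFn (fun i => if g i = 1 then U else D)

lemma dW_length {n : ℕ} (g : Fin (2*n) → ℤ) : (dW g).length = 2*n := List.length_ofFn

lemma dW_hg {n : ℕ} (g : Fin (2*n) → ℤ) (h1 : ∀ i, g i = 1 ∨ g i = -1) (i : Fin (2*n)) :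
    g i = if (dW g).get (Fin.cast (dW_length g).symm i) = U then 1 else -1 := by
  simp only [dW, List.get_ofFn]
  rcases h1 i with h | h <;> simp [h] <;> first | exact h | (show ¬ g i = 1; rw [h]; norm_num)

def dCond {n : ℕ} (g : Fin (2*n) → ℤ) : Prop :=
  (∀ i, g i = 1 ∨ g i = -1) ∧ (∀ k, 0 ≤ psum g k) ∧ ∑ i, g i = 0

def dEquiv (n : ℕ) : {g : Fin (2*n) → ℤ // dCond g} ≃ {p : DyckWord // p.semilength = n} where
  toFun x := by
    have c1 : (dW x.1).count U = (dW x.1).count D := by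
      have hb := bridge (dW x.1) (dW_length x.1) x.1 (dW_hg x.1 x.2.1) (2*n)
      rw [psum_top _ _ le_rfl, x.2.2.2, List.take_of_length_le (dW_length x.1).le] at hb
      omega
    have c2 : ∀ k, ((dW x.1).take k).count D ≤ ((dW x.1).take k).count U := by
      intro k
      have hb := bridge (dW x.1) (dW_length x.1) x.1 (dW_hg x.1 x.2.1) k
      have := x.2.2.1 k
      omega
    refine ⟨⟨dW x.1, c1, c2⟩, ?_⟩
    have h2 : 2 * DyckWord.semilength ⟨dW x.1, c1, c2⟩ = 2 * n := by
      rw [DyckWord.two_mul_semilength_eq_length]; exact dW_length x.1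
    omega
  invFun x := by
    have hm : x.1.toList.length = 2*n := by
      rw [← x.1.two_mul_semilength_eq_length, x.2]
    refine ⟨fun i => if x.1.toList.get (Fin.cast hm.symm i) = U then 1 else -1, ?_, ?_, ?_⟩
    · intro i; dsimp only; split <;> simp
    · intro k
      rw [bridge x.1.toList hm _ (fun _ => rfl) k]
      have := x.1.count_D_le_count_U k
      omega
    · rw [← psum_top _ (2*n) le_rfl, bridge x.1.toList hm _ (fun _ => rfl) (2*n),
        List.take_of_length_le hm.le]
      have := x.1.count_U_eq_count_D
      omega
  left_inv x := by
    ext i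
    rcases x.2.1 i with h | h <;>
      simp only [← dW_hg x.1 x.2.1 i, h]
  right_inv x := by
    have hm : x.1.toList.length = 2*n := by
      rw [← x.1.two_mul_semilength_eq_length, x.2]
    apply Subtype.ext
    apply DyckWord.ext
    apply List.ext_getElem (by simp [dW, hm])
    intro i hi1 hi2
    simp only [dW, List.getElem_ofFn, List.get_eq_getElem, Fin.coe_cast]
    rcases (x.1.toList[i]'hi2).dichotomy with h | h <;> simp [h]

lemma card_dCond (n : ℕ) : Nat.card {g : Fin (2*n) → ℤ // dCond g} = catalan n := by
  rw [Nat.card_congr (dEquiv n), Nat.card_eq_fintype_card,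
    DyckWord.card_dyckWord_semilength_eq_catalan]

def eA (n : ℕ) :
    {f : Fin (2*n) → ℤ × ℤ //
      (∀ i, f i ∈ ({(0,1), (1,1), (-1,-1)} : Set (ℤ × ℤ))) ∧
      (∀ k : ℕ,
        0 ≤ (∑ i ∈ Finset.univ.filter (fun i : Fin (2*n) => (i : ℕ) < k), f i).1 ∧
        0 ≤ (∑ i ∈ Finset.univ.filter (fun i : Fin (2*n) => (i : ℕ) < k), f i).2) ∧
      (∑ i, f i) = (0, 0)} ≃ {g : Fin (2*n) → ℤ // dCond g} where
  toFun x := by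
    refine ⟨fun i => (x.1 i).2, ?_, ?_, ?_⟩
    · intro i
      have h := x.2.1 i
      simp only [Set.mem_insert_iff, Set.mem_singleton_iff] at h
      rcases h with h | h | h <;> simp [h]
    · intro k
      have h := (x.2.2.1 k).2
      unfold psum
      rwa [← Prod.snd_sum]
    · rw [← Prod.snd_sum, x.2.2.2]
  invFun y := by
    refine ⟨fun i => (y.1 i, y.1 i), ?_, ?_, ?_⟩
    · intro i
      rcases y.2.1 i with h | h <;>
        simp [h, Set.mem_insert_iff, Set.mem_singleton_iff]
    · intro k
      have h := y.2.2.1 k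
      unfold psum at h
      constructor
      · rwa [Prod.fst_sum]
      · rwa [Prod.snd_sum]
    · have h := y.2.2.2
      apply Prod.ext <;> simp [Prod.fst_sum, Prod.snd_sum, h]
  left_inv x := by
    have hle : ∀ i, (x.1 i).1 ≤ (x.1 i).2 := by
      intro i
      have h := x.2.1 i
      simp only [Set.mem_insert_iff, Set.mem_singleton_iff] at h
      rcases h with h | h | h <;> simp [h]
    have heq : ∀ i, (x.1 i).1 = (x.1 i).2 := by
      by_contra hc
      push_neg at hc
      obtain ⟨j, hj⟩ := hc
      have hlt := Finset.sum_lt_sum (fun i _ => hle i)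
        ⟨j, Finset.mem_univ j, lt_of_le_of_ne (hle j) hj⟩
      rw [← Prod.fst_sum, ← Prod.snd_sum, x.2.2.2] at hlt
      simp at hlt
    apply Subtype.ext
    funext i
    exact Prod.ext (heq i).symm rfl
  right_inv y := by
    apply Subtype.ext
    funext i
    rfl

def eB (n : ℕ) :
    {f : Fin (2*n) → ℤ × ℤ //
      (∀ i, f i ∈ ({(0,1), (0,-1), (1,-1)} : Set (ℤ × ℤ))) ∧
      (∀ k : ℕ,
        0 ≤ (∑ i ∈ Finset.univ.filter (fun i : Fin (2*n) => (i : ℕ) < k), f i).1 ∧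
        0 ≤ (∑ i ∈ Finset.univ.filter (fun i : Fin (2*n) => (i : ℕ) < k), f i).2) ∧
      (∑ i, f i) = (0, 0)} ≃ {g : Fin (2*n) → ℤ // dCond g} where
  toFun x := by
    refine ⟨fun i => (x.1 i).2, ?_, ?_, ?_⟩
    · intro i
      have h := x.2.1 i
      simp only [Set.mem_insert_iff, Set.mem_singleton_iff] at h
      rcases h with h | h | h <;> simp [h]
    · intro k
      have h := (x.2.2.1 k).2
      unfold psum
      rwa [← Prod.snd_sum]
    · rw [← Prod.snd_sum, x.2.2.2]
  invFun y := by
    refine ⟨fun i => (0, y.1 i), ?_, ?_, ?_⟩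
    · intro i
      rcases y.2.1 i with h | h <;>
        simp [h, Set.mem_insert_iff, Set.mem_singleton_iff]
    · intro k
      have h := y.2.2.1 k
      unfold psum at h
      constructor
      · rw [Prod.fst_sum]; simp
      · rwa [Prod.snd_sum]
    · have h := y.2.2.2
      apply Prod.ext <;> simp [Prod.fst_sum, Prod.snd_sum, h]
  left_inv x := by
    have hle : ∀ i, 0 ≤ (x.1 i).1 := by
      intro i
      have h := x.2.1 i
      simp only [Set.mem_insert_iff, Set.mem_singleton_iff] at h
      rcases h with h | h | h <;> simp [h]
    have hz : ∀ i ∈ Finset.univ, (x.1 i).1 = 0 := by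
      rw [← Finset.sum_eq_zero_iff_of_nonneg (fun i _ => hle i)]
      rw [← Prod.fst_sum, x.2.2.2]
    apply Subtype.ext
    funext i
    exact Prod.ext (hz i (Finset.mem_univ i)).symm rfl
  right_inv y := by
    apply Subtype.ext
    funext i
    rfl


theorem closed_walks_catalan (n : ℕ) :
    qpWalks {(0,1), (1,1), (-1,-1)} (2 * n) (0, 0) = catalan n ∧
    qpWalks {(0,1), (0,-1), (1,-1)} (2 * n) (0, 0) = catalan n := by
  constructor
  · rw [qpWalks, Nat.card_congr (eA n), card_dCond]
  · rw [qpWalks, Nat.card_congr (eB n), card_dCond]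
end
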